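/- arXiv:1601.02997 — 7 statements merged into one kernel-verified Lean document; each statement's English description precedes it below -/
import Mathlib

section
/- Master Lemma: A signed pattern (ε₁a₁, …, εₙaₙ) is weakly realizable if and only if for all indices 1 ≤ i < j ≤ n the following two conditions hold, where g = gcd(aᵢ, aⱼ) and I = ∑_{i<k<j} εₖaₖ (the sum of the intermediate path, an integer): (Divisibility) g divides I; and (Parity) I/g is even if and only if Q(i,j) holds, where Q(i,j) is the condition 'εᵢ = −1' in case ν₂(aᵢ) < ν₂(aⱼ), the condition 'εⱼ = +1' in case ν₂(aᵢ) > ν₂(aⱼ), and the condition 'εᵢ = −εⱼ' in case ν₂(aᵢ) = ν₂(aⱼ). -/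
/-- A signed pattern is a list of pairs `(ε, a)` with `ε ∈ {1, -1}` and `a` a positive skip size. -/
def IsSignedPattern (p : List (ℤ × ℕ)) : Prop :=
  ∀ e ∈ p, (e.1 = 1 ∨ e.1 = -1) ∧ 0 < e.2

/-- The (signed) sum of the steps of a pattern. -/
def stepSum (p : List (ℤ × ℕ)) : ℤ :=
  (p.map (fun e => e.1 * (e.2 : ℤ))).sum

/-- The `i`-th term of the pattern started at `T`: `T_i = T + ε₁a₁ + ⋯ + εᵢaᵢ`. -/
def patTerm (T : ℤ) (p : List (ℤ × ℕ)) (i : ℕ) : ℤ :=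
  T + stepSum (p.take i)

/-- The pattern `p` is weakly realized starting from `T`: `T` is a nonnegative integer, all terms
are nonnegative, and the left term of each step is an even multiple of its skip size when the
sign is `+1`, and an odd multiple when the sign is `-1`. -/
def WeaklyRealizableFrom (T : ℤ) (p : List (ℤ × ℕ)) : Prop :=
  0 ≤ T ∧ (∀ i, i ≤ p.length → 0 ≤ patTerm T p i) ∧
    ∀ (i : ℕ) (h : i < p.length),
      ((p.get ⟨i, h⟩).1 = 1 → ∃ k : ℤ, patTerm T p i = 2 * k * ((p.get ⟨i, h⟩).2 : ℤ)) ∧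
      ((p.get ⟨i, h⟩).1 = -1 → ∃ k : ℤ, patTerm T p i = (2 * k + 1) * ((p.get ⟨i, h⟩).2 : ℤ))

/-- A pattern is weakly realizable if it is weakly realized from some starting point. -/
def WeaklyRealizable (p : List (ℤ × ℕ)) : Prop :=
  ∃ T : ℤ, WeaklyRealizableFrom T p

/-- A pattern is realizable if it is weakly realized from some starting point in such a way that
all of its terms `T₀, …, Tₙ` are pairwise distinct. -/
def Realizable (p : List (ℤ × ℕ)) : Prop :=
  ∃ T : ℤ, WeaklyRealizableFrom T p ∧
    ∀ i j : ℕ, i ≤ p.length → j ≤ p.length → i ≠ j → patTerm T p i ≠ patTerm T p j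


lemma crt2 (a b r s : ℤ) (h : (Int.gcd a b : ℤ) ∣ r - s) :
    ∃ x : ℤ, a ∣ x - r ∧ b ∣ x - s := by
  obtain ⟨c, hc⟩ := h
  have h2 : (Int.gcd a b : ℤ) = a * Int.gcdA a b + b * Int.gcdB a b := Int.gcd_eq_gcd_ab a b
  exact ⟨r - a * Int.gcdA a b * c, ⟨-(Int.gcdA a b * c), by ring⟩,
    ⟨Int.gcdB a b * c, by linear_combination hc + c * h2⟩⟩

lemma gcd_lcm_dvd (a b c : ℕ) (ha : a ≠ 0) (hb : b ≠ 0) (hc : c ≠ 0) :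
    Nat.gcd a (Nat.lcm b c) ∣ Nat.lcm (Nat.gcd a b) (Nat.gcd a c) := by
  have hbc : Nat.lcm b c ≠ 0 := Nat.lcm_ne_zero hb hc
  have hab : Nat.gcd a b ≠ 0 := Nat.gcd_ne_zero_left ha
  have hac : Nat.gcd a c ≠ 0 := Nat.gcd_ne_zero_left ha
  rw [← Nat.factorization_le_iff_dvd (Nat.gcd_ne_zero_left ha) (Nat.lcm_ne_zero hab hac),
    Nat.factorization_gcd ha hbc, Nat.factorization_lcm hab hac,
    Nat.factorization_lcm hb hc, Nat.factorization_gcd ha hb, Nat.factorization_gcd ha hc]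
  intro q
  simp only [Finsupp.inf_apply, Finsupp.sup_apply]
  omega

def Lfold (m : ℕ → ℕ) : ℕ → ℕ
  | 0 => 1
  | n + 1 => Nat.lcm (m n) (Lfold m n)

lemma Lfold_ne_zero (m : ℕ → ℕ) (n : ℕ) (hm : ∀ i < n, m i ≠ 0) : Lfold m n ≠ 0 := by
  induction n with
  | zero => simp [Lfold]
  | succ n ih =>
    exact Nat.lcm_ne_zero (hm n (by omega)) (ih fun i hi => hm i (by omega))

lemma dvd_Lfold (m : ℕ → ℕ) (n i : ℕ) (hi : i < n) : m i ∣ Lfold m n := by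
  induction n with
  | zero => omega
  | succ n ih =>
    rcases Nat.lt_succ_iff_lt_or_eq.mp hi with h | h
    · exact (ih h).trans (Nat.dvd_lcm_right _ _)
    · subst h; exact Nat.dvd_lcm_left _ _

lemma gcd_Lfold_dvd (a : ℕ) (ha : a ≠ 0) (m : ℕ → ℕ) (n : ℕ) (hm : ∀ i < n, m i ≠ 0)
    (z : ℤ) (h : ∀ i < n, (Nat.gcd a (m i) : ℤ) ∣ z) :
    (Nat.gcd a (Lfold m n) : ℤ) ∣ z := by
  induction n with
  | zero => simpa [Lfold] using ⟨z, by simp⟩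
  | succ n ih =>
    have h1 : Nat.gcd a (Lfold m (n + 1)) ∣
        Nat.lcm (Nat.gcd a (m n)) (Nat.gcd a (Lfold m n)) :=
      gcd_lcm_dvd a (m n) (Lfold m n) ha (hm n (by omega))
        (Lfold_ne_zero m n fun i hi => hm i (by omega))
    have h2 : (Nat.lcm (Nat.gcd a (m n)) (Nat.gcd a (Lfold m n)) : ℤ) ∣ z := by
      have e : ((Nat.lcm (Nat.gcd a (m n)) (Nat.gcd a (Lfold m n)) : ℕ) : ℤ)
          = (Int.lcm ((Nat.gcd a (m n) : ℕ) : ℤ) ((Nat.gcd a (Lfold m n) : ℕ) : ℤ) : ℤ) := by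
        rw [Int.lcm]; push_cast [Int.natAbs_natCast]; rfl
      rw [e]
      exact Int.coe_lcm_dvd (h n (by omega)) (ih (fun i hi => hm i (by omega)) (fun i hi => h i (by omega)))
    exact (Int.natCast_dvd_natCast.mpr h1).trans h2
    
lemma crtN (n : ℕ) (m : ℕ → ℕ) (r : ℕ → ℤ) (hm : ∀ i < n, m i ≠ 0)
    (h : ∀ i < n, ∀ j < n, (Nat.gcd (m i) (m j) : ℤ) ∣ r i - r j) :
    ∃ x : ℤ, ∀ i < n, (m i : ℤ) ∣ x - r i := by
  induction n with
  | zero => exact ⟨0, by omega⟩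
  | succ n ih =>
    obtain ⟨x, hx⟩ := ih (fun i hi => hm i (by omega))
      (fun i hi j hj => h i (by omega) j (by omega))
    have key : (Int.gcd (m n : ℤ) (Lfold m n : ℤ) : ℤ) ∣ r n - x := by
      rw [Int.gcd_natCast_natCast]
      apply gcd_Lfold_dvd (m n) (hm n (by omega)) m n (fun i hi => hm i (by omega))
      intro i hi
      have d1 : (Nat.gcd (m n) (m i) : ℤ) ∣ r n - r i := h n (by omega) i (by omega)
      have d2 : (Nat.gcd (m n) (m i) : ℤ) ∣ x - r i :=
        (Int.natCast_dvd_natCast.mpr (Nat.gcd_dvd_right _ _)).trans (hx i hi)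
      have := dvd_sub d1 d2
      simpa [sub_sub_sub_cancel_right] using this
    obtain ⟨y, hy1, hy2⟩ := crt2 (m n) (Lfold m n) (r n) x key
    refine ⟨y, fun i hi => ?_⟩
    rcases Nat.lt_succ_iff_lt_or_eq.mp hi with hlt | heq
    · have : (m i : ℤ) ∣ y - x :=
        (Int.natCast_dvd_natCast.mpr (dvd_Lfold m n i hlt)).trans hy2
      have := dvd_add this (hx i hlt)
      simpa [sub_add_sub_cancel] using this
    · subst heq; exact hy1

-- ν₂(gcd a b) = min, and parity of a / gcd
lemma padicValNat_gcd (a b : ℕ) (ha : a ≠ 0) (hb : b ≠ 0) :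
    padicValNat 2 (Nat.gcd a b) = min (padicValNat 2 a) (padicValNat 2 b) := by
  have h := Nat.factorization_gcd ha hb
  have h2 : (Nat.gcd a b).factorization 2 = (a.factorization ⊓ b.factorization) 2 := by rw [h]
  rw [Nat.factorization_def _ Nat.prime_two] at h2
  rw [h2, Finsupp.inf_apply, Nat.factorization_def _ Nat.prime_two,
    Nat.factorization_def _ Nat.prime_two]

lemma cofactor_odd_iff (a b u : ℕ) (ha : a ≠ 0) (hb : b ≠ 0)
    (hu : a = Nat.gcd a b * u) :
    (¬ 2 ∣ u) ↔ padicValNat 2 a ≤ padicValNat 2 b := by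
  have hg : Nat.gcd a b ≠ 0 := Nat.gcd_ne_zero_left ha
  have hu0 : u ≠ 0 := by rintro rfl; simp at hu; omega
  have : Fact (Nat.Prime 2) := ⟨Nat.prime_two⟩
  have hmul : padicValNat 2 a = padicValNat 2 (Nat.gcd a b) + padicValNat 2 u := by
    nth_rewrite 1 [hu]
    exact padicValNat.mul hg hu0
  rw [padicValNat_gcd a b ha hb] at hmul
  have hz : padicValNat 2 u = 0 ↔ ¬ 2 ∣ u := by
    rw [padicValNat.eq_zero_iff]; simp [hu0]
  omega

lemma pair_iff (a b : ℕ) (ha : 0 < a) (hb : 0 < b) (ei ej : ℤ)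
    (hei : ei = 1 ∨ ei = -1) (hej : ej = 1 ∨ ej = -1) (I : ℤ) :
    (2 * (Nat.gcd a b : ℤ) ∣
        I + ((if ei = 1 then 0 else 1) + ei) * a - (if ej = 1 then 0 else 1) * b) ↔
      ((Nat.gcd a b : ℤ) ∣ I ∧ ((∃ m : ℤ, I = 2 * m * (Nat.gcd a b : ℤ)) ↔
        (if padicValNat 2 a < padicValNat 2 b then ei = -1
         else if padicValNat 2 b < padicValNat 2 a then ej = 1
         else ei = -ej))) := by
  set g : ℕ := Nat.gcd a b with hg
  have hgpos : 0 < g := Nat.gcd_pos_of_pos_left _ ha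
  have hgz : (g : ℤ) ≠ 0 := by positivity
  obtain ⟨u, hu⟩ : g ∣ a := Nat.gcd_dvd_left a b
  obtain ⟨w, hw⟩ : g ∣ b := Nat.gcd_dvd_right a b
  have hua : (a : ℤ) = (g : ℤ) * u := by rw [hu]; push_cast; ring
  have hwb : (b : ℤ) = (g : ℤ) * w := by rw [hw]; push_cast; ring
  have hOu : (¬ 2 ∣ u) ↔ padicValNat 2 a ≤ padicValNat 2 b :=
    cofactor_odd_iff a b u ha.ne' hb.ne' hu
  have hOw : (¬ 2 ∣ w) ↔ padicValNat 2 b ≤ padicValNat 2 a := by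
    exact cofactor_odd_iff b a w hb.ne' ha.ne' (by rwa [Nat.gcd_comm])
  constructor
  · intro h
    have hgI : (g : ℤ) ∣ I := by
      have h1 : (g : ℤ) ∣ I + ((if ei = 1 then 0 else 1) + ei) * a
          - (if ej = 1 then 0 else 1) * b := dvd_trans ⟨2, by ring⟩ h
      have h2 : (g : ℤ) ∣ ((if ei = 1 then 0 else 1) + ei) * a := ⟨((if ei = 1 then 0 else 1) + ei) * u, by rw [hua]; ring⟩
      have h3 : (g : ℤ) ∣ (if ej = 1 then 0 else 1) * b := ⟨(if ej = 1 then 0 else 1) * w, by rw [hwb]; ring⟩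
      have := dvd_sub (dvd_add h1 h3) h2
      simpa using this
    refine ⟨hgI, ?_⟩
    obtain ⟨t, ht⟩ := hgI
    have hEx : (∃ m : ℤ, I = 2 * m * (g : ℤ)) ↔ 2 ∣ t := by
      constructor
      · rintro ⟨m, hm⟩
        refine ⟨m, ?_⟩
        have : (g:ℤ) * t = (g:ℤ) * (2*m) := by rw [← ht]; rw [hm]; ring
        exact mul_left_cancel₀ hgz this
      · rintro ⟨m, hm⟩; exact ⟨m, by rw [ht, hm]; ring⟩
    rw [hEx]
    -- extract 2 ∣ X from h
    have hX : (2:ℤ) ∣ t + ((if ei = 1 then 0 else 1) + ei) * u - (if ej = 1 then 0 else 1) * w := by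
      obtain ⟨c, hc⟩ := h
      refine ⟨c, mul_left_cancel₀ hgz ?_⟩
      rw [ht, hua, hwb] at hc; linarith [hc]
    rcases lt_trichotomy (padicValNat 2 a) (padicValNat 2 b) with hv | hv | hv
    · rw [if_pos hv]
      have h1 : ¬ 2 ∣ u := hOu.mpr hv.le
      have h2 : 2 ∣ w := by by_contra hcon; exact absurd (hOw.mp hcon) (by omega)
      rcases hei with rfl | rfl <;> rcases hej with rfl | rfl <;> norm_num at hX ⊢ <;> omega
    · rw [if_neg (by omega), if_neg (by omega)]
      have h1 : ¬ 2 ∣ u := hOu.mpr (by omega)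
      have h2 : ¬ 2 ∣ w := hOw.mpr (by omega)
      rcases hei with rfl | rfl <;> rcases hej with rfl | rfl <;> norm_num at hX ⊢ <;> omega
    · rw [if_neg (by omega), if_pos hv]
      have h1 : 2 ∣ u := by by_contra hcon; exact absurd (hOu.mp hcon) (by omega)
      have h2 : ¬ 2 ∣ w := hOw.mpr hv.le
      rcases hei with rfl | rfl <;> rcases hej with rfl | rfl <;> norm_num at hX ⊢ <;> omega
  · rintro ⟨hgI, hpar⟩
    obtain ⟨t, ht⟩ := hgI
    have hEx : (∃ m : ℤ, I = 2 * m * (g : ℤ)) ↔ 2 ∣ t := by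
      constructor
      · rintro ⟨m, hm⟩
        refine ⟨m, ?_⟩
        have : (g:ℤ) * t = (g:ℤ) * (2*m) := by rw [← ht]; rw [hm]; ring
        exact mul_left_cancel₀ hgz this
      · rintro ⟨m, hm⟩; exact ⟨m, by rw [ht, hm]; ring⟩
    rw [hEx] at hpar
    suffices hX : (2:ℤ) ∣ t + ((if ei = 1 then 0 else 1) + ei) * u - (if ej = 1 then 0 else 1) * w by
      obtain ⟨c, hc⟩ := hX
      exact ⟨c, by rw [ht, hua, hwb]; linear_combination (g:ℤ) * hc⟩
    rcases lt_trichotomy (padicValNat 2 a) (padicValNat 2 b) with hv | hv | hv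
    · rw [if_pos hv] at hpar
      have h1 : ¬ 2 ∣ u := hOu.mpr hv.le
      have h2 : 2 ∣ w := by by_contra hcon; exact absurd (hOw.mp hcon) (by omega)
      rcases hei with rfl | rfl <;> rcases hej with rfl | rfl <;> norm_num at hpar ⊢ <;> omega
    · rw [if_neg (by omega), if_neg (by omega)] at hpar
      have h1 : ¬ 2 ∣ u := hOu.mpr (by omega)
      have h2 : ¬ 2 ∣ w := hOw.mpr (by omega)
      rcases hei with rfl | rfl <;> rcases hej with rfl | rfl <;> norm_num at hpar ⊢ <;> omega
    · rw [if_neg (by omega), if_pos hv] at hpar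
      have h1 : 2 ∣ u := by by_contra hcon; exact absurd (hOu.mp hcon) (by omega)
      have h2 : ¬ 2 ∣ w := hOw.mpr hv.le
      rcases hei with rfl | rfl <;> rcases hej with rfl | rfl <;> norm_num at hpar ⊢ <;> omega

def aF (p : List (ℤ × ℕ)) (i : ℕ) : ℕ := (p.getD i (1,1)).2
def eF (p : List (ℤ × ℕ)) (i : ℕ) : ℤ := (p.getD i (1,1)).1
noncomputable def rF (p : List (ℤ × ℕ)) (i : ℕ) : ℤ :=
  (if eF p i = 1 then 0 else 1) * (aF p i : ℤ) - stepSum (p.take i)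

lemma pGet (p : List (ℤ × ℕ)) (i : ℕ) (h : i < p.length) :
    p.get ⟨i, h⟩ = (eF p i, aF p i) := by
  have h1 : p.getD i (1,1) = p[i] := List.getD_eq_getElem p (1,1) h
  rw [List.get_eq_getElem, eF, aF, h1]

lemma stepSum_append (q r : List (ℤ × ℕ)) : stepSum (q ++ r) = stepSum q + stepSum r := by
  simp [stepSum]

lemma stepSum_take_succ (p : List (ℤ × ℕ)) (i : ℕ) (h : i < p.length) :
    stepSum (p.take (i + 1)) = stepSum (p.take i) + eF p i * (aF p i : ℤ) := by
  rw [List.take_succ, stepSum_append]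
  congr 1
  have h1 : p.getD i (1,1) = p[i] := List.getD_eq_getElem p (1,1) h
  simp [List.getElem?_eq_getElem h, stepSum, eF, aF, h1]

lemma stepSum_split (p : List (ℤ × ℕ)) (i j : ℕ) (hij : i < j) :
    stepSum (p.take j) = stepSum (p.take (i + 1)) + stepSum ((p.take j).drop (i + 1)) := by
  conv_lhs => rw [← List.take_append_drop (i + 1) (p.take j)]
  rw [stepSum_append, List.take_take, min_eq_left (by omega)]

lemma eF_pm (p : List (ℤ × ℕ)) (hp : IsSignedPattern p) (i : ℕ) (h : i < p.length) :
    eF p i = 1 ∨ eF p i = -1 := by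
  have := (hp (p.get ⟨i, h⟩) (p.get_mem _)).1
  rwa [pGet p i h] at this

lemma aF_pos (p : List (ℤ × ℕ)) (hp : IsSignedPattern p) (i : ℕ) (h : i < p.length) :
    0 < aF p i := by
  have := (hp (p.get ⟨i, h⟩) (p.get_mem _)).2
  rwa [pGet p i h] at this

lemma stepSum_lower (p : List (ℤ × ℕ)) (hp : IsSignedPattern p) :
    ∀ i : ℕ, -((p.map fun e => (e.2 : ℤ)).sum) ≤ stepSum (p.take i) := by
  induction p with
  | nil => intro i; simp [stepSum]
  | cons x xs ih =>
    intro i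
    have hx := hp x List.mem_cons_self
    have hxs : IsSignedPattern xs := fun e he => hp e (List.mem_cons_of_mem _ he)
    have hsum : (0:ℤ) ≤ (xs.map fun e => (e.2 : ℤ)).sum :=
      List.sum_nonneg fun x hx => by
      obtain ⟨e, he, rfl⟩ := List.mem_map.mp hx; positivity
    match i with
    | 0 =>
      have hx2 : (0:ℤ) ≤ (x.2:ℤ) := by positivity
      simp only [List.take_zero, stepSum, List.map_nil, List.sum_nil, List.map_cons,
        List.sum_cons]
      linarith
    | Nat.succ i =>
      have := ih hxs i
      simp only [List.take_succ_cons, stepSum, List.map_cons, List.sum_cons]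
      have hstep : -(x.2 : ℤ) ≤ x.1 * x.2 := by
        rcases hx.1 with h | h <;> rw [h] <;> simp
      have := ih hxs i
      simp only [stepSum] at this
      push_cast
      linarith

lemma cond_iff (p : List (ℤ × ℕ)) (hp : IsSignedPattern p) (T : ℤ) (i : ℕ) (h : i < p.length) :
    (((p.get ⟨i, h⟩).1 = 1 → ∃ k : ℤ, patTerm T p i = 2 * k * ((p.get ⟨i, h⟩).2 : ℤ)) ∧
      ((p.get ⟨i, h⟩).1 = -1 → ∃ k : ℤ, patTerm T p i = (2 * k + 1) * ((p.get ⟨i, h⟩).2 : ℤ)))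
    ↔ (2 * (aF p i : ℤ)) ∣ T - rF p i := by
  rw [pGet p i h]
  rcases eF_pm p hp i h with he | he <;> rw [he] <;> simp only [rF, he, patTerm]
  · norm_num
    constructor
    · rintro ⟨k, hk⟩; exact ⟨k, by linarith⟩
    · rintro ⟨k, hk⟩; exact ⟨k, by linarith⟩
  · norm_num
    constructor
    · rintro ⟨k, hk⟩; exact ⟨k, by linarith⟩
    · rintro ⟨k, hk⟩; exact ⟨k, by linarith⟩

lemma weakly_iff (p : List (ℤ × ℕ)) (hp : IsSignedPattern p) :
    WeaklyRealizable p ↔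
      ∃ T : ℤ, ∀ i : ℕ, ∀ h : i < p.length, (2 * (aF p i : ℤ)) ∣ T - rF p i := by
  constructor
  · rintro ⟨T, _, _, hsteps⟩
    exact ⟨T, fun i h => (cond_iff p hp T i h).mp (hsteps i h)⟩
  · rintro ⟨T, hT⟩
    set n := p.length with hn
    set A : ℤ := (p.map fun e => (e.2 : ℤ)).sum with hA
    have hA0 : 0 ≤ A := List.sum_nonneg fun x hx => by
      obtain ⟨e, he, rfl⟩ := List.mem_map.mp hx; positivity
    set L : ℕ := Lfold (aF p) n with hL
    have hL1 : 1 ≤ (L : ℤ) := by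
      have := Lfold_ne_zero (aF p) n (fun i hi => (aF_pos p hp i hi).ne')
      rw [hL]; exact_mod_cast Nat.one_le_iff_ne_zero.mpr this
    set N : ℤ := A + |T| with hN
    have hN0 : 0 ≤ N := by positivity
    refine ⟨T + 2 * L * N, ?_, ?_, ?_⟩
    · have h2 : 2 * N ≤ 2 * (L : ℤ) * N := by nlinarith
      have habs : -T ≤ |T| := neg_le_abs T
      linarith [hN.ge, hN.le]
    · intro i _
      have hlow := stepSum_lower p hp i
      have h2 : 2 * N ≤ 2 * (L : ℤ) * N := by nlinarith
      have habs : -T ≤ |T| := neg_le_abs T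
      simp only [patTerm]
      linarith [hN.ge, hN.le, hA.ge, hA.le]
    · intro i h
      rw [cond_iff p hp _ i h]
      have h1 : (2 * (aF p i : ℤ)) ∣ T - rF p i := hT i h
      obtain ⟨c, hc⟩ := dvd_Lfold (aF p) n i h
      have h2 : (2 * (aF p i : ℤ)) ∣ 2 * (L : ℤ) * N := by
        refine ⟨c * N, ?_⟩
        have : (L : ℤ) = (aF p i : ℤ) * c := by exact_mod_cast congrArg (Nat.cast) hc
        rw [this]; ring
      have := dvd_add h1 h2
      simpa [add_sub_right_comm] using this

lemma rF_sub (p : List (ℤ × ℕ)) (i j : ℕ) (hij : i < j) (hj : j < p.length) :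
    rF p i - rF p j =
      stepSum ((p.take j).drop (i + 1))
        + ((if eF p i = 1 then 0 else 1) + eF p i) * (aF p i : ℤ)
        - (if eF p j = 1 then 0 else 1) * (aF p j : ℤ) := by
  have h1 := stepSum_take_succ p i (hij.trans hj)
  have h2 := stepSum_split p i j hij
  simp only [rF]
  linarith

lemma pair_cond_iff (p : List (ℤ × ℕ)) (hp : IsSignedPattern p) (i j : ℕ)
    (hij : i < j) (hj : j < p.length) :
    ((Nat.gcd (2 * aF p i) (2 * aF p j) : ℤ) ∣ rF p i - rF p j) ↔
      (((Nat.gcd (aF p i) (aF p j) : ℤ)) ∣ stepSum ((p.take j).drop (i + 1)) ∧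
        ((∃ m : ℤ, stepSum ((p.take j).drop (i + 1)) =
            2 * m * (Nat.gcd (aF p i) (aF p j) : ℤ)) ↔
          (if padicValNat 2 (aF p i) < padicValNat 2 (aF p j) then eF p i = -1
           else if padicValNat 2 (aF p j) < padicValNat 2 (aF p i) then eF p j = 1
           else eF p i = -(eF p j)))) := by
  rw [rF_sub p i j hij hj, Nat.gcd_mul_left]
  push_cast
  exact pair_iff (aF p i) (aF p j) (aF_pos p hp i (hij.trans hj)) (aF_pos p hp j hj)
    (eF p i) (eF p j) (eF_pm p hp i (hij.trans hj)) (eF_pm p hp j hj) _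


/-- **Master Lemma.** A signed pattern is weakly realizable if and only if for all indices
`i < j` the Divisibility and Parity conditions hold, where `g = gcd(aᵢ, aⱼ)` and `I` is the sum
of the intermediate path. -/
theorem master_lemma (p : List (ℤ × ℕ)) (hp : IsSignedPattern p) :
    WeaklyRealizable p ↔
      ∀ (i j : ℕ) (hij : i < j) (hj : j < p.length),
        ((Nat.gcd (p.get ⟨i, hij.trans hj⟩).2 (p.get ⟨j, hj⟩).2 : ℤ) ∣
            stepSum ((p.take j).drop (i + 1))) ∧
        ((∃ m : ℤ, stepSum ((p.take j).drop (i + 1)) =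
              2 * m * (Nat.gcd (p.get ⟨i, hij.trans hj⟩).2 (p.get ⟨j, hj⟩).2 : ℤ)) ↔
          (if padicValNat 2 (p.get ⟨i, hij.trans hj⟩).2 < padicValNat 2 (p.get ⟨j, hj⟩).2 then
              (p.get ⟨i, hij.trans hj⟩).1 = -1
            else if padicValNat 2 (p.get ⟨j, hj⟩).2 < padicValNat 2 (p.get ⟨i, hij.trans hj⟩).2 then
              (p.get ⟨j, hj⟩).1 = 1
            else (p.get ⟨i, hij.trans hj⟩).1 = -(p.get ⟨j, hj⟩).1)) := by
  rw [weakly_iff p hp]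
  have hget : ∀ (i j : ℕ) (hij : i < j) (hj : j < p.length),
      (((Nat.gcd (p.get ⟨i, hij.trans hj⟩).2 (p.get ⟨j, hj⟩).2 : ℤ) ∣
            stepSum ((p.take j).drop (i + 1))) ∧
        ((∃ m : ℤ, stepSum ((p.take j).drop (i + 1)) =
              2 * m * (Nat.gcd (p.get ⟨i, hij.trans hj⟩).2 (p.get ⟨j, hj⟩).2 : ℤ)) ↔
          (if padicValNat 2 (p.get ⟨i, hij.trans hj⟩).2 < padicValNat 2 (p.get ⟨j, hj⟩).2 then
              (p.get ⟨i, hij.trans hj⟩).1 = -1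
            else if padicValNat 2 (p.get ⟨j, hj⟩).2 < padicValNat 2 (p.get ⟨i, hij.trans hj⟩).2 then
              (p.get ⟨j, hj⟩).1 = 1
            else (p.get ⟨i, hij.trans hj⟩).1 = -(p.get ⟨j, hj⟩).1)))
      ↔ ((Nat.gcd (2 * aF p i) (2 * aF p j) : ℤ) ∣ rF p i - rF p j) := by
    intro i j hij hj
    rw [pGet p i (hij.trans hj), pGet p j hj, pair_cond_iff p hp i j hij hj]
  constructor
  · rintro ⟨T, hT⟩ i j hij hj
    rw [hget i j hij hj]
    have d1 : (Nat.gcd (2 * aF p i) (2 * aF p j) : ℤ) ∣ T - rF p i :=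
      (Int.natCast_dvd_natCast.mpr (Nat.gcd_dvd_left _ _)).trans (by
        have := hT i (hij.trans hj); push_cast at this ⊢; exact this)
    have d2 : (Nat.gcd (2 * aF p i) (2 * aF p j) : ℤ) ∣ T - rF p j :=
      (Int.natCast_dvd_natCast.mpr (Nat.gcd_dvd_right _ _)).trans (by
        have := hT j hj; push_cast at this ⊢; exact this)
    have := dvd_sub d2 d1
    simpa [sub_sub_sub_cancel_left] using this
  · intro H
    obtain ⟨x, hx⟩ := crtN p.length (fun i => 2 * aF p i) (rF p)
      (fun i hi => Nat.mul_ne_zero two_ne_zero (aF_pos p hp i hi).ne')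
      (fun i hi j hj => by
        rcases lt_trichotomy i j with hlt | rfl | hgt
        · exact (hget i j hlt hj).mp (H i j hlt hj)
        · simp
        · have hd := (hget j i hgt hi).mp (H j i hgt hi)
          rw [Nat.gcd_comm] at hd
          simpa [neg_sub] using dvd_neg.mpr hd)
    refine ⟨x, fun i h => ?_⟩
    have := hx i h
    push_cast at this ⊢
    exact this
end

section
/- If S is a set of at most two positive integers, then there exists a sequence x : {1,2,3,…} → {−1,+1} such that |∑_{i=1}^{k} x(i·s)| ≤ 1 for every s ∈ S and every k ≥ 1; that is, the natural numbers can be 2-colored with discrepancy 1 with respect to every homogeneous arithmetic progression with common difference in S. -/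
/-- The natural numbers can be `±1`-colored so that every homogeneous arithmetic progression
with common difference in `S` has discrepancy at most 1. -/
def HasDiscrepancyOne (S : Set ℕ) : Prop :=
  ∃ x : ℕ → ℤ, (∀ n, x n = 1 ∨ x n = -1) ∧
    ∀ s ∈ S, ∀ k : ℕ, 1 ≤ k → |∑ i ∈ Finset.Icc 1 k, x (i * s)| ≤ 1

/-- The skip set `S` forces discrepancy two. -/
def ForcesDiscrepancyTwo (S : Set ℕ) : Prop := ¬ HasDiscrepancyOne S


lemma sum_pair (y : ℕ → ℤ) (h : ∀ m, 1 ≤ m → y (2*m) = - y (2*m-1)) :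
    ∀ k, ∑ i ∈ Finset.Icc 1 (2*k), y i = 0 := by
  intro k
  induction k with
  | zero => simp
  | succ k ih =>
    have h1 : 2*(k+1) = (2*k+1)+1 := by omega
    rw [h1, Finset.sum_Icc_succ_top (by omega), Finset.sum_Icc_succ_top (by omega), ih]
    have h2 := h (k+1) (by omega)
    rw [show 2*(k+1)-1 = 2*k+1 from by omega, show 2*(k+1) = 2*k+1+1 from by omega] at h2
    linarith

lemma abs_sum_le (y : ℕ → ℤ) (hy : ∀ i, y i = 1 ∨ y i = -1)
    (h : ∀ m, 1 ≤ m → y (2*m) = - y (2*m-1)) (k : ℕ) :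
    |∑ i ∈ Finset.Icc 1 k, y i| ≤ 1 := by
  rcases Nat.even_or_odd k with ⟨m, hm⟩ | ⟨m, hm⟩
  · rw [hm, show m + m = 2*m by omega, sum_pair y h]; norm_num
  · rw [hm, show 2*m+1 = (2*m)+1 by rfl, Finset.sum_Icc_succ_top (by omega), sum_pair y h]
    rcases hy (2*m+1) with h' | h' <;> rw [h'] <;> norm_num


/-- Single modulus construction. -/
lemma core_eq (a : ℕ) (ha : 0 < a) :
    ∃ x : ℕ → ℤ, (∀ n, x n = 1 ∨ x n = -1) ∧
      (∀ m, 1 ≤ m → x ((2*m) * a) = - x ((2*m-1) * a)) := by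
  refine ⟨fun n => if a ∣ n then (-1 : ℤ)^(n/a) else 1, ?_, ?_⟩
  · intro n
    by_cases h : a ∣ n
    · simp only [h, if_true]
      rcases Nat.even_or_odd (n/a) with he | ho
      · left; exact Even.neg_one_pow he
      · right; exact Odd.neg_one_pow ho
    · simp [h]
  · intro m hm
    have h1 : a ∣ (2*m)*a := Dvd.intro (2*m) (mul_comm _ _)
    have h2 : a ∣ (2*m-1)*a := Dvd.intro (2*m-1) (mul_comm _ _)
    simp only [h1, h2, if_true, Nat.mul_div_cancel _ ha]
    have he : Even (2*m) := ⟨m, by omega⟩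
    have ho : Odd (2*m-1) := ⟨m-1, by omega⟩
    rw [Even.neg_one_pow he, Odd.neg_one_pow ho]
    norm_num


lemma core_ne (a b : ℕ) (ha : 0 < a) (hb : 0 < b) (hnd : ¬ b ∣ a) :
    ∃ x : ℕ → ℤ, (∀ n, x n = 1 ∨ x n = -1) ∧
      (∀ m, 1 ≤ m → x ((2*m) * a) = - x ((2*m-1) * a)) ∧
      (∀ m, 1 ≤ m → x ((2*m) * b) = - x ((2*m-1) * b)) := by
  classical
  set L := Nat.lcm a b with hL
  set A := L / a with hA
  set B := L / b with hB
  have hdLa : a ∣ L := Nat.dvd_lcm_left a b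
  have hdLb : b ∣ L := Nat.dvd_lcm_right a b
  have hLpos : 0 < L := Nat.lcm_pos ha hb
  have haA : a * A = L := Nat.mul_div_cancel' hdLa
  have hbB : b * B = L := Nat.mul_div_cancel' hdLb
  have hA2 : 2 ≤ A := by
    by_contra h
    push_neg at h
    interval_cases A
    · omega
    · exact hnd (by rw [← haA] at hdLb; simpa using hdLb)
  have hinj : ∀ t t' : ℕ, 0 < t → 0 < t' → (t*A+1)/2 = (t'*A+1)/2 → t = t' := by
    have key : ∀ t t' : ℕ, t < t' → (t*A+1)/2 < (t'*A+1)/2 := by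
      intro t t' h
      have h1 : t*A + 2 ≤ t'*A := by
        calc t*A + 2 ≤ t*A + A := by omega
        _ = (t+1)*A := by ring
        _ ≤ t'*A := Nat.mul_le_mul_right _ (by omega)
      omega
    intro t t' ht ht' hc
    rcases lt_trichotomy t t' with h | h | h
    · exact absurd hc (Nat.ne_of_lt (key _ _ h))
    · exact h
    · exact absurd hc.symm (Nat.ne_of_lt (key _ _ h))
  set G : ℕ → ℤ := fun u =>
    if h : ∃ t, 0 < t ∧ (t*A+1)/2 = u then (-1:ℤ)^(h.choose*A + h.choose*B) else 1 with hG
  have hGval : ∀ t, 0 < t → G ((t*A+1)/2) = (-1:ℤ)^(t*A + t*B) := by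
    intro t ht
    have hex : ∃ t', 0 < t' ∧ (t'*A+1)/2 = (t*A+1)/2 := ⟨t, ht, rfl⟩
    rw [hG]
    simp only
    rw [dif_pos hex]
    have hs := hex.choose_spec
    rw [hinj _ _ hs.1 ht hs.2]
  have hG1 : ∀ u, G u = 1 ∨ G u = -1 := by
    intro u
    rw [hG]
    simp only
    split
    · rcases Nat.even_or_odd (Exists.choose _ * A + Exists.choose _ * B) with he | ho
      · left; exact Even.neg_one_pow he
      · right; exact Odd.neg_one_pow ho
    · left; rfl
  set x : ℕ → ℤ := fun n =>
    if a ∣ n then (-1:ℤ)^(n/a) * G ((n/a+1)/2)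
    else if b ∣ n then (-1:ℤ)^(n/b) else 1 with hx
  have hxa : ∀ k, x (k * a) = (-1:ℤ)^k * G ((k+1)/2) := by
    intro k
    have hd : a ∣ k*a := Dvd.intro k (mul_comm _ _)
    rw [hx]
    simp only [hd, if_true, Nat.mul_div_cancel _ ha]
  have hxb : ∀ k, 0 < k → x (k * b) = (-1:ℤ)^k := by
    intro k hk
    by_cases hak : a ∣ k*b
    · have hLd : L ∣ k*b := Nat.lcm_dvd hak (Dvd.intro k (mul_comm _ _))
      obtain ⟨t, ht⟩ := hLd
      have htpos : 0 < t := by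
        rcases Nat.eq_zero_or_pos t with h | h
        · rw [h, mul_zero] at ht; exact absurd ht (by positivity)
        · exact h
      have hdiva : (k*b)/a = t*A := by
        rw [ht, ← haA, show a * A * t = (t*A) * a by ring, Nat.mul_div_cancel _ ha]
      have hk_eq : k = t*B := by
        have h' : k * b = (t*B)*b := by rw [ht, ← hbB]; ring
        exact Nat.eq_of_mul_eq_mul_right hb h'
      rw [hx]
      simp only [hak, if_true, hdiva]
      rw [hGval t htpos, hk_eq, ← pow_add,
        show t*A + (t*A + t*B) = 2*(t*A) + t*B by ring, pow_add, pow_mul]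
      norm_num
    · have hd : b ∣ k*b := Dvd.intro k (mul_comm _ _)
      rw [hx]
      simp only [hak, if_false, hd, if_true, Nat.mul_div_cancel _ hb]
  refine ⟨x, ?_, ?_, ?_⟩
  · intro n
    rw [hx]
    simp only
    split
    · rcases Nat.even_or_odd (n/a) with he | ho
      · rw [Even.neg_one_pow he]
        rcases hG1 ((n/a+1)/2) with h | h <;> rw [h] <;> norm_num
      · rw [Odd.neg_one_pow ho]
        rcases hG1 ((n/a+1)/2) with h | h <;> rw [h] <;> norm_num
    · split
      · rcases Nat.even_or_odd (n/b) with he | ho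
        · left; exact Even.neg_one_pow he
        · right; exact Odd.neg_one_pow ho
      · left; rfl
  · intro m hm
    rw [hxa, hxa]
    rw [show (2*m+1)/2 = m by omega, show (2*m-1+1)/2 = m by omega]
    rw [Even.neg_one_pow ⟨m, by omega⟩, Odd.neg_one_pow ⟨m-1, by omega⟩]
    ring
  · intro m hm
    rw [hxb _ (by omega), hxb _ (by omega)]
    rw [Even.neg_one_pow ⟨m, by omega⟩, Odd.neg_one_pow ⟨m-1, by omega⟩]
    ring


lemma core (a b : ℕ) (ha : 0 < a) (hb : 0 < b) :
    ∃ x : ℕ → ℤ, (∀ n, x n = 1 ∨ x n = -1) ∧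
      (∀ m, 1 ≤ m → x ((2*m) * a) = - x ((2*m-1) * a)) ∧
      (∀ m, 1 ≤ m → x ((2*m) * b) = - x ((2*m-1) * b)) := by
  by_cases h1 : b ∣ a
  · by_cases h2 : a ∣ b
    · have hab : a = b := Nat.dvd_antisymm h2 h1
      obtain ⟨x, hx1, hx2⟩ := core_eq a ha
      exact ⟨x, hx1, hx2, hab ▸ hx2⟩
    · obtain ⟨x, h1', h2', h3'⟩ := core_ne b a hb ha h2
      exact ⟨x, h1', h3', h2'⟩
  · exact core_ne a b ha hb h1

/-- **Skip sets of sizes 1 and 2.** If `|S| ≤ 2` then `ℕ` can be 2-colored with discrepancy 1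
with respect to each homogeneous arithmetic progression with common difference in `S`. -/
theorem skip_sets_of_size_at_most_two (S : Finset ℕ) (hpos : ∀ s ∈ S, 0 < s)
    (hcard : S.card ≤ 2) : HasDiscrepancyOne ↑S := by
  obtain ⟨a, b, ha, hb, hmem⟩ : ∃ a b : ℕ, 0 < a ∧ 0 < b ∧ ∀ s ∈ S, s = a ∨ s = b := by
    have h0 : S.card = 0 ∨ S.card = 1 ∨ S.card = 2 := by omega
    rcases h0 with h | h | h
    · have hS : S = ∅ := Finset.card_eq_zero.mp h
      exact ⟨1, 1, one_pos, one_pos, by simp [hS]⟩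
    · obtain ⟨s, hS⟩ := Finset.card_eq_one.mp h
      refine ⟨s, s, hpos s (by simp [hS]), hpos s (by simp [hS]), ?_⟩
      intro t ht
      left
      rw [hS] at ht
      simpa using ht
    · obtain ⟨u, v, huv, hS⟩ := Finset.card_eq_two.mp h
      refine ⟨u, v, hpos u (by simp [hS]), hpos v (by simp [hS]), ?_⟩
      intro t ht
      rw [hS] at ht
      simpa using ht
  obtain ⟨x, hsh, hpa, hpb⟩ := core a b ha hb
  refine ⟨x, hsh, ?_⟩
  intro s hs k hk
  have hpair : ∀ m, 1 ≤ m → x ((2*m) * s) = - x ((2*m-1) * s) := by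
    rcases hmem s (Finset.mem_coe.mp hs) with rfl | rfl
    · exact hpa
    · exact hpb
  exact abs_sum_le (fun i => x (i * s)) (fun i => hsh _) hpair k
end

section
/- Let S = {a, x, y, z} be a reduced set of four positive integers with ν₂(a) > ν₂(x) = ν₂(y) = ν₂(z) (so x, y, z are odd and a is even), and suppose the skip graph G(S) contains no cycle of length 3. Then G(S) contains a cycle of length 5 if and only if the three odd elements can be labeled x, y, z so that: either a = 2x − y − z or a = y + z − 2x; x ∣ y; gcd(y, z) ∣ x; and gcd(a, y) ∣ x. -/
/-- The skip graph `G(S)`: for each `s ∈ S` and `k ∈ ℕ`, the vertices `2ks` and `(2k+1)s`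
are joined by an edge. -/
def skipGraph (S : Set ℕ) : SimpleGraph ℕ where
  Adj m n := m ≠ n ∧ ∃ s ∈ S, ∃ k : ℕ,
    (m = 2 * k * s ∧ n = 2 * k * s + s) ∨ (n = 2 * k * s ∧ m = 2 * k * s + s)
  symm := ⟨by
    rintro m n ⟨hmn, s, hs, k, h⟩
    exact ⟨hmn.symm, s, hs, k, h.symm⟩⟩
  loopless := ⟨by
    rintro m ⟨hmm, -⟩
    exact hmm rfl⟩

/-- The edge `e` has skip size `s`, i.e. its endpoints differ by `s`. -/
def EdgeSkip (s : ℕ) (e : Sym2 ℕ) : Prop := ∃ m : ℕ, e = s(m, m + s)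

open SimpleGraph Walk

/-- `Good s u w` : `u` and `w` are joined by a skip-`s` edge. -/
def Good (s u w : ℕ) : Prop := (w = u + s ∧ 2*s ∣ u) ∨ (u = w + s ∧ 2*s ∣ w)

lemma good_symm {s u w : ℕ} (h : Good s u w) : Good s w u := h.symm

lemma adj_good {S : Set ℕ} {m n : ℕ} (h : (skipGraph S).Adj m n) : ∃ s ∈ S, Good s m n := by
  obtain ⟨_, s, hs, k, h⟩ := h
  refine ⟨s, hs, ?_⟩
  rcases h with ⟨h1, h2⟩ | ⟨h1, h2⟩
  · exact Or.inl ⟨by rw [h1, h2], ⟨k, by rw [h1]; ring⟩⟩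
  · exact Or.inr ⟨by rw [h1, h2], ⟨k, by rw [h1]; ring⟩⟩

lemma good_adj {S : Set ℕ} {m n s : ℕ} (hs : s ∈ S) (hpos : 0 < s) (h : Good s m n) :
    (skipGraph S).Adj m n := by
  rcases h with ⟨h1, k, h2⟩ | ⟨h1, k, h2⟩
  · exact ⟨by omega, s, hs, k, Or.inl ⟨by rw [h2]; ring, by rw [h1, h2]; ring⟩⟩
  · exact ⟨by omega, s, hs, k, Or.inr ⟨by rw [h2]; ring, by rw [h1, h2]; ring⟩⟩

lemma good_unique {s u w w' : ℕ} (hpos : 0 < s) (h : Good s u w) (h' : Good s u w') : w = w' := by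
  have key : ∀ p q : ℕ, 2*s ∣ p → 2*s ∣ q → p = q + s → False := by
    intro p q hp hq hpq
    have hd : 2*s ∣ p - q := Nat.dvd_sub hp hq
    have : p - q = s := by omega
    rw [this] at hd
    have := Nat.le_of_dvd hpos hd; omega
  rcases h with ⟨h1, h2⟩ | ⟨h1, h2⟩ <;> rcases h' with ⟨h3, h4⟩ | ⟨h3, h4⟩
  · omega
  · exact absurd (key u w' h2 h4 h3) (by simp)
  · exact absurd (key u w h4 h2 h1) (by simp)
  · omega

lemma good_dvd {s u w : ℕ} (h : Good s u w) : s ∣ u ∧ s ∣ w := by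
  have hs2 : s ∣ 2*s := dvd_mul_left s 2
  rcases h with ⟨h1, h2⟩ | ⟨h1, h2⟩
  · exact ⟨hs2.trans h2, by rw [h1]; exact (hs2.trans h2).add (dvd_refl s)⟩
  · exact ⟨by rw [h1]; exact (hs2.trans h2).add (dvd_refl s), hs2.trans h2⟩

lemma good_parity_odd {s u w : ℕ} (hs : Odd s) (h : Good s u w) : u % 2 + w % 2 = 1 := by
  obtain ⟨j, hj⟩ := hs
  rcases h with ⟨h1, h2⟩ | ⟨h1, h2⟩ <;>
    · have h2' : 2 ∣ _ := dvd_trans ⟨s, rfl⟩ h2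
      omega

lemma good_parity_even {s u w : ℕ} (hs : 2 ∣ s) (h : Good s u w) : u % 2 = 0 ∧ w % 2 = 0 := by
  rcases h with ⟨h1, h2⟩ | ⟨h1, h2⟩ <;>
    · have h2' : 2 ∣ _ := dvd_trans ⟨s, rfl⟩ h2
      omega

lemma good_orient {s u w : ℕ} (hs : Odd s) (h : Good s u w) (hu : u % 2 = 0) :
    w = u + s ∧ 2*s ∣ u := by
  rcases h with h | ⟨h1, h2⟩
  · exact h
  · exfalso
    obtain ⟨j, hj⟩ := hs
    have h2' : 2 ∣ _ := dvd_trans ⟨s, rfl⟩ h2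
    omega

lemma odd_of_dvd_odd {d n : ℕ} (h : d ∣ n) (hn : Odd n) : Odd d := by
  rw [Nat.odd_iff] at hn ⊢
  by_contra hd
  have h2 : 2 ∣ d := by omega
  have := h2.trans h
  omega

lemma two_mul_dvd {g m : ℕ} (hg : Odd g) (h1 : g ∣ m) (h2 : 2 ∣ m) : 2*g ∣ m :=
  Nat.Coprime.mul_dvd_of_dvd_of_dvd ((Nat.coprime_two_left).2 hg) h2 h1

lemma mk_cycle3 {G : SimpleGraph ℕ} {v0 v1 v2 : ℕ}
    (h01 : G.Adj v0 v1) (h12 : G.Adj v1 v2) (h20 : G.Adj v2 v0) :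
    ∃ (v : ℕ) (c : G.Walk v v), c.IsCycle ∧ c.length = 3 := by
  have d01 := h01.ne; have d12 := h12.ne; have d20 := h20.ne
  refine ⟨v0, cons h01 (cons h12 (cons h20 nil)), ?_, rfl⟩
  refine ⟨⟨?_, by simp⟩, ?_⟩
  · simp only [Walk.isTrail_def, Walk.edges_cons, Walk.edges_nil, List.nodup_cons,
      List.mem_cons, List.not_mem_nil, or_false, List.mem_singleton, List.nodup_nil, and_true,
      Sym2.eq, Sym2.rel_iff', Prod.mk.injEq, Prod.swap_prod_mk, not_or]
    tauto
  · simp only [Walk.support_cons, Walk.support_nil, List.tail_cons, List.nodup_cons,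
      List.mem_cons, List.not_mem_nil, or_false, List.mem_singleton, List.nodup_nil, and_true,
      not_or]
    tauto

lemma mk_cycle5 {G : SimpleGraph ℕ} {v0 v1 v2 v3 v4 : ℕ}
    (h01 : G.Adj v0 v1) (h12 : G.Adj v1 v2) (h23 : G.Adj v2 v3) (h34 : G.Adj v3 v4)
    (h40 : G.Adj v4 v0)
    (d02 : v0 ≠ v2) (d03 : v0 ≠ v3) (d13 : v1 ≠ v3) (d14 : v1 ≠ v4) (d24 : v2 ≠ v4) :
    ∃ (v : ℕ) (c : G.Walk v v), c.IsCycle ∧ c.length = 5 := by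
  have d01 := h01.ne; have d12 := h12.ne; have d23 := h23.ne; have d34 := h34.ne
  have d40 := h40.ne
  refine ⟨v0, cons h01 (cons h12 (cons h23 (cons h34 (cons h40 nil)))), ?_, rfl⟩
  refine ⟨⟨?_, by simp⟩, ?_⟩
  · simp only [Walk.isTrail_def, Walk.edges_cons, Walk.edges_nil, List.nodup_cons,
      List.mem_cons, List.not_mem_nil, or_false, List.mem_singleton, List.nodup_nil, and_true,
      Sym2.eq, Sym2.rel_iff', Prod.mk.injEq, Prod.swap_prod_mk, not_or]
    tauto
  · simp only [Walk.support_cons, Walk.support_nil, List.tail_cons, List.nodup_cons,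
      List.mem_cons, List.not_mem_nil, or_false, List.mem_singleton, List.nodup_nil, and_true,
      not_or]
    tauto

lemma destruct5 {G : SimpleGraph ℕ} {v : ℕ} (c : G.Walk v v) (hc : c.IsCycle)
    (hl : c.length = 5) :
    ∃ v1 v2 v3 v4 : ℕ, G.Adj v v1 ∧ G.Adj v1 v2 ∧ G.Adj v2 v3 ∧ G.Adj v3 v4 ∧ G.Adj v4 v ∧
      v ≠ v1 ∧ v ≠ v2 ∧ v ≠ v3 ∧ v ≠ v4 ∧ v1 ≠ v2 ∧ v1 ≠ v3 ∧ v1 ≠ v4 ∧ v2 ≠ v3 ∧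
      v2 ≠ v4 ∧ v3 ≠ v4 := by
  cases c with
  | nil => simp at hl
  | cons h1 p =>
    cases p with
    | nil => simp at hl
    | cons h2 p =>
      cases p with
      | nil => simp at hl
      | cons h3 p =>
        cases p with
        | nil => simp at hl
        | cons h4 p =>
          cases p with
          | nil => simp at hl
          | cons h5 p =>
            cases p with
            | cons h6 p => simp [Walk.length_cons] at hl
            | nil =>
              rename_i v1 v2 v3 v4
              refine ⟨v1, v2, v3, v4, h1, h2, h3, h4, h5, ?_⟩
              have hn := hc.2
              simp only [Walk.support_cons, Walk.support_nil, List.tail_cons,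
                List.nodup_cons, List.mem_cons, List.not_mem_nil, or_false,
                List.mem_singleton, List.nodup_nil, and_true, not_or] at hn
              tauto

lemma modEq_lcm {a b d1 d2 : ℕ} (h1 : a ≡ b [MOD d1]) (h2 : a ≡ b [MOD d2]) :
    a ≡ b [MOD Nat.lcm d1 d2] := by
  rw [Nat.modEq_iff_dvd] at h1 h2 ⊢
  have h := Int.coe_lcm_dvd h1 h2
  have he : (Int.lcm (d1 : ℤ) (d2 : ℤ) : ℤ) = ((Nat.lcm d1 d2 : ℕ) : ℤ) := by
    simp [Int.lcm, Int.natAbs_natCast]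
  rwa [he] at h

lemma gcd_lcm_dvd_s8 (n m p : ℕ) (hn : n ≠ 0) (hm : m ≠ 0) (hp : p ≠ 0) :
    Nat.gcd (Nat.lcm n m) p ∣ Nat.lcm (Nat.gcd n p) (Nat.gcd m p) := by
  have hlnm : Nat.lcm n m ≠ 0 := Nat.lcm_ne_zero hn hm
  have hgnp : Nat.gcd n p ≠ 0 := Nat.gcd_ne_zero_right hp
  have hgmp : Nat.gcd m p ≠ 0 := Nat.gcd_ne_zero_right hp
  have hL : Nat.lcm (Nat.gcd n p) (Nat.gcd m p) ≠ 0 := Nat.lcm_ne_zero hgnp hgmp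
  have hG : Nat.gcd (Nat.lcm n m) p ≠ 0 := Nat.gcd_ne_zero_right hp
  rw [← Nat.factorization_le_iff_dvd hG hL]
  rw [Nat.factorization_gcd hlnm hp, Nat.factorization_lcm hn hm,
    Nat.factorization_lcm hgnp hgmp, Nat.factorization_gcd hn hp, Nat.factorization_gcd hm hp]
  rw [Finsupp.le_def]
  intro q
  simp only [Finsupp.inf_apply, Finsupp.sup_apply]
  omega

lemma crt3 (n m p : ℕ) (hn : n ≠ 0) (hm : m ≠ 0) (hp : p ≠ 0) (A B C : ℕ)
    (hab : A ≡ B [MOD Nat.gcd n m]) (hac : A ≡ C [MOD Nat.gcd n p])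
    (hbc : B ≡ C [MOD Nat.gcd m p]) (N : ℕ) :
    ∃ k : ℕ, N ≤ k ∧ k ≡ A [MOD n] ∧ k ≡ B [MOD m] ∧ k ≡ C [MOD p] := by
  obtain ⟨k₁, hk₁A, hk₁B⟩ := Nat.chineseRemainder' hab
  have d1 : (k₁ : ℕ) ≡ C [MOD Nat.gcd n p] :=
    ((hk₁A.of_dvd (Nat.gcd_dvd_left n p)).trans hac)
  have d2 : (k₁ : ℕ) ≡ C [MOD Nat.gcd m p] :=
    ((hk₁B.of_dvd (Nat.gcd_dvd_left m p)).trans hbc)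
  have d3 : (k₁ : ℕ) ≡ C [MOD Nat.gcd (Nat.lcm n m) p] :=
    (modEq_lcm d1 d2).of_dvd (gcd_lcm_dvd_s8 n m p hn hm hp)
  obtain ⟨k₂, hk₂₁, hk₂C⟩ := Nat.chineseRemainder' d3
  refine ⟨k₂ + N * (n * m * p), ?_, ?_, ?_, ?_⟩
  · have h : 0 < n * m * p := by positivity
    have h2 : N ≤ N * (n*m*p) := Nat.le_mul_of_pos_right N h
    omega
  · have h : (k₂ : ℕ) + N * (n*m*p) ≡ k₂ [MOD n] := by
      have h0 : N * (n*m*p) ≡ 0 [MOD n] := (Nat.modEq_zero_iff_dvd).2 ⟨N*m*p, by ring⟩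
      simpa using (Nat.ModEq.add_left (k₂ : ℕ) h0)
    exact h.trans ((hk₂₁.of_dvd (Nat.dvd_lcm_left n m)).trans hk₁A)
  · have h : (k₂ : ℕ) + N * (n*m*p) ≡ k₂ [MOD m] := by
      have h0 : N * (n*m*p) ≡ 0 [MOD m] := (Nat.modEq_zero_iff_dvd).2 ⟨N*n*p, by ring⟩
      simpa using (Nat.ModEq.add_left (k₂ : ℕ) h0)
    exact h.trans ((hk₂₁.of_dvd (Nat.dvd_lcm_right n m)).trans hk₁B)
  · have h : (k₂ : ℕ) + N * (n*m*p) ≡ k₂ [MOD p] := by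
      have h0 : N * (n*m*p) ≡ 0 [MOD p] := (Nat.modEq_zero_iff_dvd).2 ⟨N*n*m, by ring⟩
      simpa using (Nat.ModEq.add_left (k₂ : ℕ) h0)
    exact h.trans hk₂C

lemma three_cycle_of_diff {S : Set ℕ} {a q r : ℕ} (haS : a ∈ S) (hqS : q ∈ S) (hrS : r ∈ S)
    (ha : 0 < a) (hq : 0 < q) (ea : 2 ∣ a) (oq : Odd q) (orr : Odd r) (h : a + q = r) :
    ∃ (v : ℕ) (c : (skipGraph S).Walk v v), c.IsCycle ∧ c.length = 3 := by
  have hr : 0 < r := by omega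
  have hle : a ≤ 2*a*q := by
    have h2 : 2*a ≤ 2*a*q := Nat.le_mul_of_pos_right (2*a) hq
    omega
  set C := 2*a*q - a with hC
  have hCa : C + a = 2*a*q := by omega
  have haC : a ∣ C := by
    have h1 : a ∣ 2*a*q := ⟨2*q, by ring⟩
    have h2 := Nat.dvd_sub h1 (dvd_refl a)
    rwa [show 2*a*q - a = C from rfl] at h2
  have hab : (0:ℕ) ≡ 0 [MOD Nat.gcd (2*a) (2*r)] := Nat.ModEq.refl 0
  have hac : (0:ℕ) ≡ C [MOD Nat.gcd (2*a) (2*q)] := by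
    rw [Nat.gcd_mul_left]
    refine (Nat.modEq_zero_iff_dvd.2 ?_).symm
    exact (two_mul_dvd (odd_of_dvd_odd (Nat.gcd_dvd_right a q) oq)
      (Nat.gcd_dvd_left a q) ea).trans haC
  have hbc : (0:ℕ) ≡ C [MOD Nat.gcd (2*r) (2*q)] := by
    rw [Nat.gcd_mul_left]
    refine (Nat.modEq_zero_iff_dvd.2 ?_).symm
    have hga : Nat.gcd r q ∣ a := by
      have h2 := Nat.dvd_sub (Nat.gcd_dvd_left r q) (Nat.gcd_dvd_right r q)
      rwa [show r - q = a by omega] at h2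
    exact (two_mul_dvd (odd_of_dvd_odd (Nat.gcd_dvd_right r q) oq) hga ea).trans haC
  obtain ⟨k, -, h2a, h2r, h2q⟩ := crt3 (2*a) (2*r) (2*q) (by omega) (by omega) (by omega)
    0 0 C hab hac hbc 0
  have d2a : 2*a ∣ k := Nat.modEq_zero_iff_dvd.1 h2a
  have d2r : 2*r ∣ k := Nat.modEq_zero_iff_dvd.1 h2r
  have d2q : 2*q ∣ k + a := by
    have e1 := h2q.add_right a
    rw [hCa] at e1
    have e2 : (2*a*q) ≡ 0 [MOD 2*q] := Nat.modEq_zero_iff_dvd.2 ⟨a, by ring⟩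
    exact Nat.modEq_zero_iff_dvd.1 (e1.trans e2)
  have A1 : (skipGraph S).Adj k (k+a) := good_adj haS ha (Or.inl ⟨rfl, d2a⟩)
  have A2 : (skipGraph S).Adj (k+a) (k+r) := by
    have h2 := good_adj hqS hq (Or.inl ⟨rfl, d2q⟩ : Good q (k+a) (k+a+q))
    rwa [show k+a+q = k+r by omega] at h2
  have A3 : (skipGraph S).Adj (k+r) k :=
    (good_adj hrS hr (Or.inl ⟨rfl, d2r⟩ : Good r k (k+r))).symm
  exact mk_cycle3 A1 A2 A3

lemma set3_eq {a1 a2 a3 x y z : ℕ} (m1 : a1 = x ∨ a1 = y ∨ a1 = z)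
    (m2 : a2 = x ∨ a2 = y ∨ a2 = z) (m3 : a3 = x ∨ a3 = y ∨ a3 = z)
    (d12 : a1 ≠ a2) (d13 : a1 ≠ a3) (d23 : a2 ≠ a3) :
    ({a1, a2, a3} : Set ℕ) = {x, y, z} := by
  rcases m1 with rfl | rfl | rfl <;> rcases m2 with rfl | rfl | rfl <;>
    rcases m3 with rfl | rfl | rfl <;> first
      | exact absurd rfl (by assumption)
      | (ext w; simp only [Set.mem_insert_iff, Set.mem_singleton_iff]; try tauto)

lemma core_forward (a x y z : ℕ) (ha : 0 < a)
    (noDiff : ∀ q r : ℕ, (q = x ∨ q = y ∨ q = z) → (r = x ∨ r = y ∨ r = z) →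
      a + q = r → False)
    (s2 s3 s4 s5 : ℕ)
    (m2 : s2 = x ∨ s2 = y ∨ s2 = z) (m3 : s3 = x ∨ s3 = y ∨ s3 = z)
    (m4 : s4 = x ∨ s4 = y ∨ s4 = z) (m5 : s5 = x ∨ s5 = y ∨ s5 = z)
    (ox : Odd x) (oy : Odd y) (oz : Odd z) (ea : 2 ∣ a)
    (n23 : s2 ≠ s3) (n34 : s3 ≠ s4) (n45 : s4 ≠ s5)
    (v0 v1 v2 v3 v4 : ℕ)
    (e1 : Good a v0 v1) (e2 : Good s2 v1 v2) (e3 : Good s3 v2 v3)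
    (e4 : Good s4 v3 v4) (e5 : Good s5 v4 v0) :
    ∃ x' y' z' : ℕ, ({x', y', z'} : Set ℕ) = {x, y, z} ∧
      ((a : ℤ) = 2 * x' - y' - z' ∨ (a : ℤ) = y' + z' - 2 * x') ∧
      x' ∣ y' ∧ Nat.gcd y' z' ∣ x' ∧ Nat.gcd a y' ∣ x' := by
  have o2 : Odd s2 := by rcases m2 with rfl | rfl | rfl <;> assumption
  have o3 : Odd s3 := by rcases m3 with rfl | rfl | rfl <;> assumption
  have o4 : Odd s4 := by rcases m4 with rfl | rfl | rfl <;> assumption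
  have o5 : Odd s5 := by rcases m5 with rfl | rfl | rfl <;> assumption
  obtain ⟨p0, p1⟩ := good_parity_even ea e1
  have p2 : v2 % 2 = 1 := by have := good_parity_odd o2 e2; omega
  have p3 : v3 % 2 = 0 := by have := good_parity_odd o3 e3; omega
  obtain ⟨q2, d2⟩ := good_orient o2 e2 p1
  obtain ⟨q3, d3⟩ := good_orient o3 (good_symm e3) p3
  obtain ⟨q4, d4⟩ := good_orient o4 e4 p3
  obtain ⟨q5, d5⟩ := good_orient o5 (good_symm e5) p0
  have hs3n : s3 ∣ v3 := (dvd_mul_left s3 2).trans d3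
  have hs4n : s4 ∣ v3 := (dvd_mul_left s4 2).trans d4
  have hs5v0 : s5 ∣ v0 := (good_dvd e5).2
  have hav0 : a ∣ v0 := (good_dvd e1).1
  have hav1 : a ∣ v1 := (good_dvd e1).2
  have hs2v1 : s2 ∣ v1 := (good_dvd e2).1
  have hs2v2 : s2 ∣ v2 := (good_dvd e2).2
  have hsign : v1 = v0 + a ∨ v0 = v1 + a := by
    rcases e1 with ⟨h1, -⟩ | ⟨h1, -⟩
    · exact Or.inl h1
    · exact Or.inr h1
  by_cases h24 : s2 = s4
  · subst h24
    have hus3 : s2 ∣ s3 := by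
      have h1 : s2 ∣ v3 + s3 := q3 ▸ hs2v2
      have h2 := Nat.dvd_sub h1 hs4n
      rwa [Nat.add_sub_cancel_left] at h2
    by_cases h35 : s3 = s5
    · exfalso
      subst h35
      have h1 : s3 ∣ v3 + s2 := by
        rw [← q4, q5]; exact Dvd.dvd.add hs5v0 dvd_rfl
      have h2 := Nat.dvd_sub h1 hs3n
      rw [Nat.add_sub_cancel_left] at h2
      exact n34 (Nat.dvd_antisymm hus3 h2).symm
    · refine ⟨s2, s3, s5, set3_eq m2 m3 m5 n23 (by omega) h35, ?_, hus3, ?_, ?_⟩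
      · omega
      · have hd3 : Nat.gcd s3 s5 ∣ v3 := (Nat.gcd_dvd_left s3 s5).trans hs3n
        have hd4 : Nat.gcd s3 s5 ∣ v3 + s2 := by
          rw [← q4, q5]
          exact Dvd.dvd.add ((Nat.gcd_dvd_right s3 s5).trans hs5v0) (Nat.gcd_dvd_right s3 s5)
        have h2 := Nat.dvd_sub hd4 hd3
        rwa [Nat.add_sub_cancel_left] at h2
      · have hd1 : Nat.gcd a s3 ∣ v1 := (Nat.gcd_dvd_left a s3).trans hav1
        have hd2 : Nat.gcd a s3 ∣ v1 + s2 := by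
          rw [q2.symm.trans q3]
          exact Dvd.dvd.add ((Nat.gcd_dvd_right a s3).trans hs3n) (Nat.gcd_dvd_right a s3)
        have h2 := Nat.dvd_sub hd2 hd1
        rwa [Nat.add_sub_cancel_left] at h2
  · by_cases h35 : s3 = s5
    · subst h35
      have hvy : s3 ∣ s4 := by
        have h1 : s3 ∣ v3 + s4 := by
          rw [← q4, q5]; exact Dvd.dvd.add hs5v0 dvd_rfl
        have h2 := Nat.dvd_sub h1 hs3n
        rwa [Nat.add_sub_cancel_left] at h2
      refine ⟨s3, s4, s2, set3_eq m3 m4 m2 n34 (Ne.symm n23) (fun h => h24 h.symm), ?_,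
        hvy, ?_, ?_⟩
      · omega
      · have hd1 : Nat.gcd s4 s2 ∣ v3 + s3 := by
          rw [← q3]
          exact (Nat.gcd_dvd_right s4 s2).trans hs2v2
        have hd2 : Nat.gcd s4 s2 ∣ v3 := (Nat.gcd_dvd_left s4 s2).trans hs4n
        have h2 := Nat.dvd_sub hd1 hd2
        rwa [Nat.add_sub_cancel_left] at h2
      · have hd1 : Nat.gcd a s4 ∣ v0 + s3 := by
          rw [← q5, q4]
          exact Dvd.dvd.add ((Nat.gcd_dvd_right a s4).trans hs4n) (Nat.gcd_dvd_right a s4)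
        have hd2 : Nat.gcd a s4 ∣ v0 := (Nat.gcd_dvd_left a s4).trans hav0
        have h2 := Nat.dvd_sub hd1 hd2
        rwa [Nat.add_sub_cancel_left] at h2
    · exfalso
      have h25 : s2 = s5 := by
        rcases m2 with rfl | rfl | rfl <;> rcases m3 with rfl | rfl | rfl <;>
          rcases m4 with rfl | rfl | rfl <;> rcases m5 with rfl | rfl | rfl <;> omega
      subst h25
      have hor : a + s3 = s4 ∨ a + s4 = s3 := by omega
      rcases hor with h | h
      · exact noDiff s3 s4 m3 m4 h
      · exact noDiff s4 s3 m4 m3 h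

set_option maxHeartbeats 4000000 in
lemma backward_construct (a x y z x' y' z' : ℕ) (ha : 0 < a)
    (hx : 0 < x) (hy : 0 < y) (hz : 0 < z)
    (ox : Odd x) (oy : Odd y) (oz : Odd z) (ea : 2 ∣ a)
    (hxy : x ≠ y) (hxz : x ≠ z) (hyz : y ≠ z)
    (hset : ({x', y', z'} : Set ℕ) = {x, y, z})
    (hsign : (a : ℤ) = 2 * x' - y' - z' ∨ (a : ℤ) = y' + z' - 2 * x')
    (hdvd : x' ∣ y') (hgyz : Nat.gcd y' z' ∣ x') (hgay : Nat.gcd a y' ∣ x') :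
    ∃ (v : ℕ) (c : (skipGraph ({a, x, y, z} : Set ℕ)).Walk v v), c.IsCycle ∧ c.length = 5 := by
  have mx' : x' = x ∨ x' = y ∨ x' = z := by
    have h : x' ∈ ({x, y, z} : Set ℕ) := by rw [← hset]; simp
    simpa using h
  have my' : y' = x ∨ y' = y ∨ y' = z := by
    have h : y' ∈ ({x, y, z} : Set ℕ) := by rw [← hset]; simp
    simpa using h
  have mz' : z' = x ∨ z' = y ∨ z' = z := by
    have h : z' ∈ ({x, y, z} : Set ℕ) := by rw [← hset]; simp
    simpa using h
  have ox' : Odd x' := by rcases mx' with h|h|h <;> rw [h] <;> assumption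
  have oy' : Odd y' := by rcases my' with h|h|h <;> rw [h] <;> assumption
  have oz' : Odd z' := by rcases mz' with h|h|h <;> rw [h] <;> assumption
  have px' : 0 < x' := by rcases mx' with h|h|h <;> omega
  have py' : 0 < y' := by rcases my' with h|h|h <;> omega
  have pz' : 0 < z' := by rcases mz' with h|h|h <;> omega
  have hxm : x = x' ∨ x = y' ∨ x = z' := by
    have h : x ∈ ({x', y', z'} : Set ℕ) := by rw [hset]; simp
    simpa using h
  have hym : y = x' ∨ y = y' ∨ y = z' := by
    have h : y ∈ ({x', y', z'} : Set ℕ) := by rw [hset]; simp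
    simpa using h
  have hzm : z = x' ∨ z = y' ∨ z = z' := by
    have h : z ∈ ({x', y', z'} : Set ℕ) := by rw [hset]; simp
    simpa using h
  have hnes : x' ≠ y' ∧ x' ≠ z' ∧ y' ≠ z' := by
    rcases hxm with h1|h1|h1 <;> rcases hym with h2|h2|h2 <;> rcases hzm with h3|h3|h3 <;> omega
  obtain ⟨nxy', nxz', nyz'⟩ := hnes
  have hx'S : x' ∈ ({a, x, y, z} : Set ℕ) := by rcases mx' with h|h|h <;> rw [h] <;> simp
  have hy'S : y' ∈ ({a, x, y, z} : Set ℕ) := by rcases my' with h|h|h <;> rw [h] <;> simp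
  have hz'S : z' ∈ ({a, x, y, z} : Set ℕ) := by rcases mz' with h|h|h <;> rw [h] <;> simp
  have haS : a ∈ ({a, x, y, z} : Set ℕ) := by simp
  -- y' = x' * c with c odd
  obtain ⟨cq, hcq⟩ := hdvd
  have hxley : x' ≤ y' := Nat.le_of_dvd py' ⟨cq, hcq⟩
  have ocq : Odd cq := by
    rcases Nat.even_or_odd cq with he | ho
    · exfalso
      obtain ⟨t, ht⟩ := he
      have h2 : 2 ∣ y' := ⟨x' * t, by rw [hcq, ht]; ring⟩
      rw [Nat.odd_iff] at oy'
      omega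
    · exact ho
  have h2xy : 2*x' ∣ y' - x' := by
    obtain ⟨t, ht⟩ := ocq
    have hyt : y' = 2*x'*t + x' := by rw [hcq, ht]; ring
    exact ⟨t, by omega⟩
  -- abstract products
  set Pz := z' * x' with hPz
  set Cz := z' + 2*Pz - x' with hCzdef
  have hPzx : x' ≤ 2*Pz := by
    have h1 : x' ≤ z' * x' := Nat.le_mul_of_pos_left x' pz'
    omega
  have hCzx : Cz + x' = z' + 2*Pz := by omega
  have gyz := Nat.gcd_dvd_right y' z'
  have gyzy := Nat.gcd_dvd_left y' z'
  have hgPz : Nat.gcd y' z' ∣ Pz := gyz.mul_right x'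
  have h2Cz : 2 ∣ Cz := by
    rw [Nat.odd_iff] at ox' oz'
    omega
  have hab : (0:ℕ) ≡ Cz [MOD Nat.gcd (2*y') (2*z')] := by
    rw [Nat.gcd_mul_left]
    refine (Nat.modEq_zero_iff_dvd.2 ?_).symm
    refine two_mul_dvd (odd_of_dvd_odd gyzy oy') ?_ h2Cz
    have h1 : Nat.gcd y' z' ∣ z' + 2*Pz := dvd_add gyz (hgPz.mul_left 2)
    have h2 := Nat.dvd_sub h1 hgyz
    rwa [show z' + 2*Pz - x' = Cz by omega] at h2
  have hga : Nat.gcd y' a ∣ x' := by rwa [Nat.gcd_comm] at hgay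
  have gya := Nat.gcd_dvd_right y' a
  have gyay := Nat.gcd_dvd_left y' a
  have gza := Nat.gcd_dvd_right z' a
  have gzaz := Nat.gcd_dvd_left z' a
  have oddgya : Odd (Nat.gcd y' a) := odd_of_dvd_odd gyay oy'
  have oddgza : Odd (Nat.gcd z' a) := odd_of_dvd_odd gzaz oz'
  rcases hsign with hsP | hsM
  · -- a = 2x' - y' - z'
    have haP : a + y' + z' = 2*x' := by omega
    set Pa := a * y' with hPa
    set Ca := x' + 2*Pa - y' with hCadef
    have hPay : y' ≤ 2*Pa := by
      have h1 : y' ≤ a * y' := Nat.le_mul_of_pos_left y' ha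
      omega
    have hCay : Ca + y' = x' + 2*Pa := by omega
    have hgPa : Nat.gcd y' a ∣ Pa := gya.mul_right y'
    have h2Ca : 2 ∣ Ca := by
      rw [Nat.odd_iff] at ox' oy'
      omega
    have hac : (0:ℕ) ≡ Ca [MOD Nat.gcd (2*y') (2*a)] := by
      rw [Nat.gcd_mul_left]
      refine (Nat.modEq_zero_iff_dvd.2 ?_).symm
      refine two_mul_dvd oddgya ?_ h2Ca
      have h1 : Nat.gcd y' a ∣ x' + 2*Pa := dvd_add hga (hgPa.mul_left 2)
      have h2 := Nat.dvd_sub h1 gyay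
      rwa [show x' + 2*Pa - y' = Ca by omega] at h2
    have hbc : Cz ≡ Ca [MOD Nat.gcd (2*z') (2*a)] := by
      rw [Nat.gcd_mul_left, Nat.modEq_iff_dvd]
      have hdiff : (Ca:ℤ) - Cz = (a:ℤ) + 2*Pa - 2*Pz := by omega
      rw [hdiff]
      have D1 : ((2 * Nat.gcd z' a : ℕ) : ℤ) ∣ (a:ℤ) :=
        Int.natCast_dvd_natCast.2 (two_mul_dvd oddgza gza ea)
      have D2 : ((2 * Nat.gcd z' a : ℕ) : ℤ) ∣ (2*Pa : ℤ) := by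
        have h2 : (2 : ℕ) * Nat.gcd z' a ∣ 2 * Pa :=
          Nat.mul_dvd_mul_left 2 (gza.mul_right y')
        exact_mod_cast Int.natCast_dvd_natCast.2 h2
      have D3 : ((2 * Nat.gcd z' a : ℕ) : ℤ) ∣ (2*Pz : ℤ) := by
        have h2 : (2 : ℕ) * Nat.gcd z' a ∣ 2 * Pz :=
          Nat.mul_dvd_mul_left 2 (gzaz.mul_right x')
        exact_mod_cast Int.natCast_dvd_natCast.2 h2
      push_cast at D1 D2 D3 ⊢
      exact dvd_sub (dvd_add D1 D2) D3
    obtain ⟨n, hN, H1, H2, H3⟩ := crt3 (2*y') (2*z') (2*a) (by omega) (by omega) (by omega)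
      0 Cz Ca hab hac hbc (x'+y'+z'+a)
    have d2y : 2*y' ∣ n := Nat.modEq_zero_iff_dvd.1 H1
    have d2x : 2*x' ∣ n := (show 2*x' ∣ 2*y' from ⟨cq, by rw [hcq]; ring⟩).trans d2y
    have d2x1 : 2*x' ∣ n + y' - x' := by
      have h1 := dvd_add d2x h2xy
      rwa [show n + (y' - x') = n + y' - x' by omega] at h1
    have dz0 : 2*z' ∣ n + x' - z' := by
      have e1 := H2.add_right x'
      rw [hCzx] at e1
      have e2 : z' + 2*Pz ≡ z' + 0 [MOD 2*z'] :=
        Nat.ModEq.add_left z' (Nat.modEq_zero_iff_dvd.2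
          (Nat.mul_dvd_mul_left 2 (dvd_mul_right z' x')))
      have e3 : n + x' ≡ z' [MOD 2*z'] := e1.trans (by simpa using e2)
      exact (Nat.modEq_iff_dvd' (by omega : z' ≤ n + x')).1 e3.symm
    have da : 2*a ∣ n + y' - x' := by
      have e1 := H3.add_right y'
      rw [hCay] at e1
      have e2 : x' + 2*Pa ≡ x' + 0 [MOD 2*a] :=
        Nat.ModEq.add_left x' (Nat.modEq_zero_iff_dvd.2
          (Nat.mul_dvd_mul_left 2 (dvd_mul_right a y')))
      have e3 : n + y' ≡ x' [MOD 2*a] := e1.trans (by simpa using e2)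
      exact (Nat.modEq_iff_dvd' (by omega : x' ≤ n + y')).1 e3.symm
    have A01 : (skipGraph ({a, x, y, z} : Set ℕ)).Adj (n + x' - z') (n + y' - x') :=
      good_adj haS ha (Or.inr ⟨by omega, da⟩)
    have A12 : (skipGraph ({a, x, y, z} : Set ℕ)).Adj (n + y' - x') (n + y') :=
      good_adj hx'S px' (Or.inl ⟨by omega, d2x1⟩)
    have A23 : (skipGraph ({a, x, y, z} : Set ℕ)).Adj (n + y') n :=
      (good_adj hy'S py' (Or.inl ⟨by omega, d2y⟩ : Good y' n (n + y'))).symm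
    have A34 : (skipGraph ({a, x, y, z} : Set ℕ)).Adj n (n + x') :=
      good_adj hx'S px' (Or.inl ⟨by omega, d2x⟩)
    have A40 : (skipGraph ({a, x, y, z} : Set ℕ)).Adj (n + x') (n + x' - z') :=
      (good_adj hz'S pz' (Or.inl ⟨by omega, dz0⟩ : Good z' (n + x' - z') (n + x'))).symm
    have oy2 := Nat.odd_iff.1 oy'
    have ox2 := Nat.odd_iff.1 ox'
    exact mk_cycle5 A01 A12 A23 A34 A40 (by omega) (by omega) (by omega) (by omega) (by omega)
  · -- a = y' + z' - 2x'
    have haM : a + 2*x' = y' + z' := by omega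
    set Pa := a * x' with hPa
    set Ca := z' + 2*Pa - x' with hCadef
    have hPax : x' ≤ 2*Pa := by
      have h1 : x' ≤ a * x' := Nat.le_mul_of_pos_left x' ha
      omega
    have hCax : Ca + x' = z' + 2*Pa := by omega
    have hgaz : Nat.gcd y' a ∣ z' := by
      have h1 : Nat.gcd y' a ∣ a + 2*x' := dvd_add gya (hga.mul_left 2)
      have h2 := Nat.dvd_sub h1 gyay
      rwa [show a + 2*x' - y' = z' by omega] at h2
    have hgPa : Nat.gcd y' a ∣ Pa := gya.mul_right x'
    have h2Ca : 2 ∣ Ca := by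
      rw [Nat.odd_iff] at ox' oz'
      omega
    have hac : (0:ℕ) ≡ Ca [MOD Nat.gcd (2*y') (2*a)] := by
      rw [Nat.gcd_mul_left]
      refine (Nat.modEq_zero_iff_dvd.2 ?_).symm
      refine two_mul_dvd oddgya ?_ h2Ca
      have h1 : Nat.gcd y' a ∣ z' + 2*Pa := dvd_add hgaz (hgPa.mul_left 2)
      have h2 := Nat.dvd_sub h1 hga
      rwa [show z' + 2*Pa - x' = Ca by omega] at h2
    have hbc : Cz ≡ Ca [MOD Nat.gcd (2*z') (2*a)] := by
      rw [Nat.gcd_mul_left, Nat.modEq_iff_dvd]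
      have hdiff : (Ca:ℤ) - Cz = 2*Pa - 2*Pz := by omega
      rw [hdiff]
      have D2 : ((2 * Nat.gcd z' a : ℕ) : ℤ) ∣ (2*Pa : ℤ) := by
        have h2 : (2 : ℕ) * Nat.gcd z' a ∣ 2 * Pa :=
          Nat.mul_dvd_mul_left 2 (gza.mul_right x')
        exact_mod_cast Int.natCast_dvd_natCast.2 h2
      have D3 : ((2 * Nat.gcd z' a : ℕ) : ℤ) ∣ (2*Pz : ℤ) := by
        have h2 : (2 : ℕ) * Nat.gcd z' a ∣ 2 * Pz :=
          Nat.mul_dvd_mul_left 2 (gzaz.mul_right x')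
        exact_mod_cast Int.natCast_dvd_natCast.2 h2
      push_cast at D2 D3 ⊢
      exact dvd_sub D2 D3
    obtain ⟨n, hN, H1, H2, H3⟩ := crt3 (2*y') (2*z') (2*a) (by omega) (by omega) (by omega)
      0 Cz Ca hab hac hbc (x'+y'+z'+a)
    have d2y : 2*y' ∣ n := Nat.modEq_zero_iff_dvd.1 H1
    have d2x : 2*x' ∣ n := (show 2*x' ∣ 2*y' from ⟨cq, by rw [hcq]; ring⟩).trans d2y
    have d2x1 : 2*x' ∣ n + y' - x' := by
      have h1 := dvd_add d2x h2xy
      rwa [show n + (y' - x') = n + y' - x' by omega] at h1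
    have dz0 : 2*z' ∣ n + x' - z' := by
      have e1 := H2.add_right x'
      rw [hCzx] at e1
      have e2 : z' + 2*Pz ≡ z' + 0 [MOD 2*z'] :=
        Nat.ModEq.add_left z' (Nat.modEq_zero_iff_dvd.2
          (Nat.mul_dvd_mul_left 2 (dvd_mul_right z' x')))
      have e3 : n + x' ≡ z' [MOD 2*z'] := e1.trans (by simpa using e2)
      exact (Nat.modEq_iff_dvd' (by omega : z' ≤ n + x')).1 e3.symm
    have da : 2*a ∣ n + x' - z' := by
      have e1 := H3.add_right x'
      rw [hCax] at e1
      have e2 : z' + 2*Pa ≡ z' + 0 [MOD 2*a] :=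
        Nat.ModEq.add_left z' (Nat.modEq_zero_iff_dvd.2
          (Nat.mul_dvd_mul_left 2 (dvd_mul_right a x')))
      have e3 : n + x' ≡ z' [MOD 2*a] := e1.trans (by simpa using e2)
      exact (Nat.modEq_iff_dvd' (by omega : z' ≤ n + x')).1 e3.symm
    have A01 : (skipGraph ({a, x, y, z} : Set ℕ)).Adj (n + x' - z') (n + y' - x') :=
      good_adj haS ha (Or.inl ⟨by omega, da⟩)
    have A12 : (skipGraph ({a, x, y, z} : Set ℕ)).Adj (n + y' - x') (n + y') :=
      good_adj hx'S px' (Or.inl ⟨by omega, d2x1⟩)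
    have A23 : (skipGraph ({a, x, y, z} : Set ℕ)).Adj (n + y') n :=
      (good_adj hy'S py' (Or.inl ⟨by omega, d2y⟩ : Good y' n (n + y'))).symm
    have A34 : (skipGraph ({a, x, y, z} : Set ℕ)).Adj n (n + x') :=
      good_adj hx'S px' (Or.inl ⟨by omega, d2x⟩)
    have A40 : (skipGraph ({a, x, y, z} : Set ℕ)).Adj (n + x') (n + x' - z') :=
      (good_adj hz'S pz' (Or.inl ⟨by omega, dz0⟩ : Good z' (n + x' - z') (n + x'))).symm
    have oy2 := Nat.odd_iff.1 oy'
    have ox2 := Nat.odd_iff.1 ox'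
    exact mk_cycle5 A01 A12 A23 A34 A40 (by omega) (by omega) (by omega) (by omega) (by omega)

set_option maxHeartbeats 4000000 in
/-- Given a reduced skip set `{a, x, y, z}` with `ν₂(a) > ν₂(x) = ν₂(y) = ν₂(z)` producing no
3-cycle, the skip graph contains a 5-cycle if and only if the odd elements can be labeled
`x, y, z` so that `a = ±(2x − y − z)`, `x ∣ y`, `gcd(y, z) ∣ x` and `gcd(a, y) ∣ x`. -/
theorem five_cycle_from_one_even (a x y z : ℕ) (ha : 0 < a) (hx : 0 < x) (hy : 0 < y)
    (hz : 0 < z) (hxy : x ≠ y) (hxz : x ≠ z) (hyz : y ≠ z)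
    (hxa : padicValNat 2 x < padicValNat 2 a)
    (hxey : padicValNat 2 x = padicValNat 2 y) (hxez : padicValNat 2 x = padicValNat 2 z)
    (hred : Nat.gcd (Nat.gcd a x) (Nat.gcd y z) = 1)
    (hno3 : ¬ ∃ (v : ℕ) (c : (skipGraph ({a, x, y, z} : Set ℕ)).Walk v v),
      c.IsCycle ∧ c.length = 3) :
    (∃ (v : ℕ) (c : (skipGraph ({a, x, y, z} : Set ℕ)).Walk v v), c.IsCycle ∧ c.length = 5) ↔
      ∃ x' y' z' : ℕ, ({x', y', z'} : Set ℕ) = {x, y, z} ∧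
        ((a : ℤ) = 2 * x' - y' - z' ∨ (a : ℤ) = y' + z' - 2 * x') ∧
        x' ∣ y' ∧ Nat.gcd y' z' ∣ x' ∧ Nat.gcd a y' ∣ x' := by
  have ea : 2 ∣ a := dvd_of_one_le_padicValNat (by omega)
  have ox : Odd x := by
    rw [Nat.odd_iff]
    by_contra hox
    have h2x : 2 ∣ x := by omega
    have h1x : 1 ≤ padicValNat 2 x := one_le_padicValNat_of_dvd hx.ne' h2x
    have h2y : 2 ∣ y := dvd_of_one_le_padicValNat (by omega)
    have h2z : 2 ∣ z := dvd_of_one_le_padicValNat (by omega)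
    have h2g : 2 ∣ Nat.gcd (Nat.gcd a x) (Nat.gcd y z) :=
      Nat.dvd_gcd (Nat.dvd_gcd ea h2x) (Nat.dvd_gcd h2y h2z)
    rw [hred] at h2g
    omega
  have ox2 : padicValNat 2 x = 0 := by
    rw [Nat.odd_iff] at ox
    by_contra h
    have := dvd_of_one_le_padicValNat (p := 2) (n := x) (by omega)
    omega
  have oy : Odd y := by
    rw [Nat.odd_iff]
    by_contra hoy
    have h2y : 2 ∣ y := by omega
    have := one_le_padicValNat_of_dvd hy.ne' h2y
    omega
  have oz : Odd z := by
    rw [Nat.odd_iff]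
    by_contra hoz
    have h2z : 2 ∣ z := by omega
    have := one_le_padicValNat_of_dvd hz.ne' h2z
    omega
  have noDiff : ∀ q r : ℕ, (q = x ∨ q = y ∨ q = z) → (r = x ∨ r = y ∨ r = z) →
      a + q = r → False := by
    intro q r mq mr h
    have hqS : q ∈ ({a, x, y, z} : Set ℕ) := by rcases mq with h'|h'|h' <;> rw [h'] <;> simp
    have hrS : r ∈ ({a, x, y, z} : Set ℕ) := by rcases mr with h'|h'|h' <;> rw [h'] <;> simp
    have oq : Odd q := by rcases mq with h'|h'|h' <;> rw [h'] <;> assumption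
    have orr : Odd r := by rcases mr with h'|h'|h' <;> rw [h'] <;> assumption
    have hq : 0 < q := by rcases mq with h'|h'|h' <;> omega
    exact hno3 (three_cycle_of_diff (by simp) hqS hrS ha hq ea oq orr h)
  constructor
  · rintro ⟨v, c, hc, hl⟩
    obtain ⟨v1, v2, v3, v4, A01, A12, A23, A34, A40, d01, d02, d03, d04, d12, d13, d14,
      d23, d24, d34⟩ := destruct5 c hc hl
    obtain ⟨s1, hs1, g1⟩ := adj_good A01
    obtain ⟨s2, hs2, g2⟩ := adj_good A12
    obtain ⟨s3, hs3, g3⟩ := adj_good A23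
    obtain ⟨s4, hs4, g4⟩ := adj_good A34
    obtain ⟨s5, hs5, g5⟩ := adj_good A40
    simp only [Set.mem_insert_iff, Set.mem_singleton_iff] at hs1 hs2 hs3 hs4 hs5
    have ps1 : 0 < s1 := by rcases hs1 with h|h|h|h <;> omega
    have ps2 : 0 < s2 := by rcases hs2 with h|h|h|h <;> omega
    have ps3 : 0 < s3 := by rcases hs3 with h|h|h|h <;> omega
    have ps4 : 0 < s4 := by rcases hs4 with h|h|h|h <;> omega
    have ps5 : 0 < s5 := by rcases hs5 with h|h|h|h <;> omega
    have ne12 : s1 ≠ s2 := fun he => d02 (good_unique ps1 (good_symm g1) (he.symm ▸ g2))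
    have ne23 : s2 ≠ s3 := fun he => d13 (good_unique ps2 (good_symm g2) (he.symm ▸ g3))
    have ne34 : s3 ≠ s4 := fun he => d24 (good_unique ps3 (good_symm g3) (he.symm ▸ g4))
    have ne45 : s4 ≠ s5 := fun he => d03 (good_unique ps4 (good_symm g4) (he.symm ▸ g5)).symm
    have ne51 : s5 ≠ s1 := fun he => d14 (good_unique ps5 (good_symm g5) (he.symm ▸ g1)).symm
    rcases hs1 with h1 | m1 <;> rcases hs2 with h2 | m2 <;> rcases hs3 with h3 | m3 <;>
        rcases hs4 with h4 | m4 <;> rcases hs5 with h5 | m5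
    · exact absurd (h1.trans h2.symm) ne12
    · exact absurd (h1.trans h2.symm) ne12
    · exact absurd (h1.trans h2.symm) ne12
    · exact absurd (h1.trans h2.symm) ne12
    · exact absurd (h1.trans h2.symm) ne12
    · exact absurd (h1.trans h2.symm) ne12
    · exact absurd (h1.trans h2.symm) ne12
    · exact absurd (h1.trans h2.symm) ne12
    · exact absurd (h3.trans h4.symm) ne34
    · exact absurd (h3.trans h4.symm) ne34
    · exact absurd (h5.trans h1.symm) ne51
    · exfalso
      rw [h1] at g1
      have P1 := good_parity_even ea g1
      have O2 : Odd s2 := by rcases m2 with rfl | rfl | rfl <;> assumption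
      have P2 := good_parity_odd O2 g2
      rw [h3] at g3
      have P3 := good_parity_even ea g3
      have O4 : Odd s4 := by rcases m4 with rfl | rfl | rfl <;> assumption
      have P4 := good_parity_odd O4 g4
      have O5 : Odd s5 := by rcases m5 with rfl | rfl | rfl <;> assumption
      have P5 := good_parity_odd O5 g5
      omega
    · exact absurd (h4.trans h5.symm) ne45
    · exfalso
      rw [h1] at g1
      have P1 := good_parity_even ea g1
      have O2 : Odd s2 := by rcases m2 with rfl | rfl | rfl <;> assumption
      have P2 := good_parity_odd O2 g2
      have O3 : Odd s3 := by rcases m3 with rfl | rfl | rfl <;> assumption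
      have P3 := good_parity_odd O3 g3
      rw [h4] at g4
      have P4 := good_parity_even ea g4
      have O5 : Odd s5 := by rcases m5 with rfl | rfl | rfl <;> assumption
      have P5 := good_parity_odd O5 g5
      omega
    · exact absurd (h5.trans h1.symm) ne51
    · rw [h1] at g1
      exact core_forward a x y z ha noDiff _ _ _ _ m2 m3 m4 m5 ox oy oz ea ne23 ne34 ne45 v v1 v2 v3 v4 g1 g2 g3 g4 g5
    · exact absurd (h2.trans h3.symm) ne23
    · exact absurd (h2.trans h3.symm) ne23
    · exact absurd (h2.trans h3.symm) ne23
    · exact absurd (h2.trans h3.symm) ne23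
    · exact absurd (h4.trans h5.symm) ne45
    · exfalso
      have O1 : Odd s1 := by rcases m1 with rfl | rfl | rfl <;> assumption
      have P1 := good_parity_odd O1 g1
      rw [h2] at g2
      have P2 := good_parity_even ea g2
      have O3 : Odd s3 := by rcases m3 with rfl | rfl | rfl <;> assumption
      have P3 := good_parity_odd O3 g3
      rw [h4] at g4
      have P4 := good_parity_even ea g4
      have O5 : Odd s5 := by rcases m5 with rfl | rfl | rfl <;> assumption
      have P5 := good_parity_odd O5 g5
      omega
    · exfalso
      have O1 : Odd s1 := by rcases m1 with rfl | rfl | rfl <;> assumption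
      have P1 := good_parity_odd O1 g1
      rw [h2] at g2
      have P2 := good_parity_even ea g2
      have O3 : Odd s3 := by rcases m3 with rfl | rfl | rfl <;> assumption
      have P3 := good_parity_odd O3 g3
      have O4 : Odd s4 := by rcases m4 with rfl | rfl | rfl <;> assumption
      have P4 := good_parity_odd O4 g4
      rw [h5] at g5
      have P5 := good_parity_even ea g5
      omega
    · rw [h2] at g2
      exact core_forward a x y z ha noDiff _ _ _ _ m3 m4 m5 m1 ox oy oz ea ne34 ne45 ne51 v1 v2 v3 v4 v g2 g3 g4 g5 g1
    · exact absurd (h3.trans h4.symm) ne34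
    · exact absurd (h3.trans h4.symm) ne34
    · exfalso
      have O1 : Odd s1 := by rcases m1 with rfl | rfl | rfl <;> assumption
      have P1 := good_parity_odd O1 g1
      have O2 : Odd s2 := by rcases m2 with rfl | rfl | rfl <;> assumption
      have P2 := good_parity_odd O2 g2
      rw [h3] at g3
      have P3 := good_parity_even ea g3
      have O4 : Odd s4 := by rcases m4 with rfl | rfl | rfl <;> assumption
      have P4 := good_parity_odd O4 g4
      rw [h5] at g5
      have P5 := good_parity_even ea g5
      omega
    · rw [h3] at g3
      exact core_forward a x y z ha noDiff _ _ _ _ m4 m5 m1 m2 ox oy oz ea ne45 ne51 ne12 v2 v3 v4 v v1 g3 g4 g5 g1 g2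
    · exact absurd (h4.trans h5.symm) ne45
    · rw [h4] at g4
      exact core_forward a x y z ha noDiff _ _ _ _ m5 m1 m2 m3 ox oy oz ea ne51 ne12 ne23 v3 v4 v v1 v2 g4 g5 g1 g2 g3
    · rw [h5] at g5
      exact core_forward a x y z ha noDiff _ _ _ _ m1 m2 m3 m4 ox oy oz ea ne12 ne23 ne34 v4 v v1 v2 v3 g5 g1 g2 g3 g4
    · exfalso
      have O1 : Odd s1 := by rcases m1 with rfl | rfl | rfl <;> assumption
      have P1 := good_parity_odd O1 g1
      have O2 : Odd s2 := by rcases m2 with rfl | rfl | rfl <;> assumption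
      have P2 := good_parity_odd O2 g2
      have O3 : Odd s3 := by rcases m3 with rfl | rfl | rfl <;> assumption
      have P3 := good_parity_odd O3 g3
      have O4 : Odd s4 := by rcases m4 with rfl | rfl | rfl <;> assumption
      have P4 := good_parity_odd O4 g4
      have O5 : Odd s5 := by rcases m5 with rfl | rfl | rfl <;> assumption
      have P5 := good_parity_odd O5 g5
      omega
  · rintro ⟨x', y', z', hset, hsign, hdvd, hgyz, hgay⟩
    exact backward_construct a x y z x' y' z' ha hx hy hz ox oy oz ea hxy hxz hyz
      hset hsign hdvd hgyz hgay
end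

section
/- If a weakly realizable signed pattern contains three consecutive entries with skip sizes a, b, a (with any signs), then a divides b. -/
lemma patTerm_succ (T : ℤ) (p : List (ℤ × ℕ)) (i : ℕ) (h : i < p.length) :
    patTerm T p (i+1) = patTerm T p i + (p.get ⟨i,h⟩).1 * ((p.get ⟨i,h⟩).2 : ℤ) := by
  have := List.sum_take_succ (p.map (fun e => e.1 * (e.2 : ℤ))) i (by simpa using h)
  simp only [patTerm, stepSum, List.map_take] at *
  rw [this]
  simp
  ring

/-- Any term whose step has skip size `c` is an integer multiple of `c`. -/
lemma mult_of_step (T : ℤ) (p : List (ℤ × ℕ)) (hw : WeaklyRealizableFrom T p)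
    (i : ℕ) (h : i < p.length) (hs : (p.get ⟨i,h⟩).1 = 1 ∨ (p.get ⟨i,h⟩).1 = -1) :
    ∃ m : ℤ, patTerm T p i = m * ((p.get ⟨i,h⟩).2 : ℤ) := by
  obtain ⟨-, -, h3⟩ := hw
  obtain ⟨h1, h2⟩ := h3 i h
  rcases hs with hs | hs
  · obtain ⟨k, hk⟩ := h1 hs; exact ⟨2*k, hk⟩
  · obtain ⟨k, hk⟩ := h2 hs; exact ⟨2*k+1, hk⟩

/-- If a weakly realizable signed pattern contains three consecutive entries with skip sizes
`a, b, a` (with any signs), then `a ∣ b`. -/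
theorem aba_implies_dvd (l₁ l₂ : List (ℤ × ℕ)) (ε₁ ε₂ ε₃ : ℤ) (a b : ℕ)
    (hp : IsSignedPattern (l₁ ++ [(ε₁, a), (ε₂, b), (ε₃, a)] ++ l₂))
    (h : WeaklyRealizable (l₁ ++ [(ε₁, a), (ε₂, b), (ε₃, a)] ++ l₂)) :
    a ∣ b := by
  obtain ⟨T, hw⟩ := h
  set p := l₁ ++ [(ε₁, a), (ε₂, b), (ε₃, a)] ++ l₂ with hpdef
  set n := l₁.length with hn
  have hlen : p.length = l₁.length + (3 + l₂.length) := by simp [hpdef]; omega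
  have h1 : n < p.length := by omega
  have h2 : n + 1 < p.length := by omega
  have h3 : n + 2 < p.length := by omega
  have hg1 : p.get ⟨n, h1⟩ = (ε₁, a) := by
    simp [hpdef, hn, List.getElem_append_right]
  have hg2 : p.get ⟨n+1, h2⟩ = (ε₂, b) := by
    simp [hpdef, hn, List.getElem_append_right]
  have hg3 : p.get ⟨n+2, h3⟩ = (ε₃, a) := by
    simp [hpdef, hn, List.getElem_append_right]
  obtain ⟨m₁, hm₁⟩ := mult_of_step T p hw n h1 (by rw [hg1]; exact (hp (ε₁,a) (by simp [hpdef])).1)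
  obtain ⟨m₃, hm₃⟩ := mult_of_step T p hw (n+2) h3 (by rw [hg3]; exact (hp (ε₃,a) (by simp [hpdef])).1)
  rw [hg1] at hm₁
  rw [hg3] at hm₃
  have hstep1 := patTerm_succ T p n h1
  have hstep2 := patTerm_succ T p (n+1) h2
  rw [hg1] at hstep1; rw [hg2] at hstep2
  have key : ε₂ * (b : ℤ) = (m₃ - m₁ - ε₁) * (a : ℤ) := by
    have : patTerm T p (n+2) = patTerm T p n + ε₁ * a + ε₂ * b := by
      rw [hstep2, hstep1]
    rw [hm₃, hm₁] at this
    ring_nf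
    ring_nf at this
    linarith
  have hε₂ : ε₂ = 1 ∨ ε₂ = -1 := (hp (ε₂, b) (by simp [hpdef])).1
  have : (a : ℤ) ∣ (b : ℤ) := by
    rcases hε₂ with h' | h' <;> rw [h'] at key
    · exact ⟨m₃ - m₁ - ε₁, by linarith⟩
    · exact ⟨-(m₃ - m₁ - ε₁), by linarith⟩
  exact_mod_cast this
end

section
/- Suppose a weakly realizable signed pattern contains two consecutive entries εa followed by ε′b (with a, b positive integers and ε, ε′ ∈ {+1, −1}). Then: if ν₂(a) > ν₂(b), then ε′ = +1; if ν₂(a) < ν₂(b), then ε = −1; and if ν₂(a) = ν₂(b), then ε = −ε′. -/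
private lemma aux_le' {a : ℕ} (ha : 0 < a) (k : ℤ) (n : ℕ) (h : (2:ℤ)^n ∣ (2*k+1) * a) :
    n ≤ padicValNat 2 a := by
  have hc : IsCoprime ((2:ℤ)^n) (2*k+1) :=
    (show IsCoprime (2:ℤ) (2*k+1) from ⟨-k, 1, by ring⟩).pow_left
  have hd : (2:ℤ)^n ∣ (a:ℤ) := hc.dvd_of_dvd_mul_left h
  have hd' : 2^n ∣ a := by exact_mod_cast hd
  haveI : Fact (Nat.Prime 2) := ⟨Nat.prime_two⟩
  exact (padicValNat_dvd_iff_le ha.ne').mp hd'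

private lemma odd_even' {a b : ℕ} (ha : 0 < a) (k m : ℤ)
    (h : (2*k+1) * a = 2 * m * b) : padicValNat 2 b < padicValNat 2 a := by
  set w := padicValNat 2 b with hw
  obtain ⟨c, hc⟩ := pow_padicValNat_dvd (p := 2) (n := b)
  rw [← hw] at hc
  have hdvd : (2:ℤ)^(w + 1) ∣ (2*k+1) * a := by
    refine ⟨m * c, ?_⟩
    rw [h, hc]
    push_cast
    ring
  exact aux_le' ha k _ hdvd

private lemma odd_odd' {a b : ℕ} (ha : 0 < a) (hb : 0 < b) (k m : ℤ)
    (h : (2*k+1) * a = (2*m+1) * b) : padicValNat 2 a = padicValNat 2 b := by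
  have h1 : padicValNat 2 a ≤ padicValNat 2 b := by
    set v := padicValNat 2 a with hv
    obtain ⟨c, hc⟩ := pow_padicValNat_dvd (p := 2) (n := a)
    rw [← hv] at hc
    refine aux_le' hb m _ ⟨(2*k+1) * c, ?_⟩
    rw [← h]
    conv_lhs => rw [hc]
    push_cast; ring
  have h2 : padicValNat 2 b ≤ padicValNat 2 a := by
    set w := padicValNat 2 b with hw
    obtain ⟨c, hc⟩ := pow_padicValNat_dvd (p := 2) (n := b)
    rw [← hw] at hc
    refine aux_le' ha k _ ⟨(2*m+1) * c, ?_⟩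
    rw [h]
    conv_lhs => rw [hc]
    push_cast; ring
  omega

/-- Sign constraints on two consecutive entries `εa, ε'b` of a weakly realizable signed
pattern, according to the 2-adic valuations of `a` and `b`. -/
theorem consecutive_sign_constraints (l₁ l₂ : List (ℤ × ℕ)) (ε ε' : ℤ) (a b : ℕ)
    (hp : IsSignedPattern (l₁ ++ [(ε, a), (ε', b)] ++ l₂))
    (h : WeaklyRealizable (l₁ ++ [(ε, a), (ε', b)] ++ l₂)) :
    (padicValNat 2 b < padicValNat 2 a → ε' = 1) ∧
    (padicValNat 2 a < padicValNat 2 b → ε = -1) ∧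
    (padicValNat 2 a = padicValNat 2 b → ε = -ε') := by
  obtain ⟨T, hT0, hnn, hsteps⟩ := h
  set p := l₁ ++ [(ε, a), (ε', b)] ++ l₂ with hpdef
  set n := l₁.length with hn
  have hlen : p.length = n + 2 + l₂.length := by simp [hpdef]; omega
  have hn1 : n < p.length := by omega
  have hn2 : n + 1 < p.length := by omega
  have hget1 : p.get ⟨n, hn1⟩ = (ε, a) := by
    simp [hpdef, hn, List.getElem_append_right, List.append_assoc]
  have hget2 : p.get ⟨n+1, hn2⟩ = (ε', b) := by
    simp [hpdef, hn, List.getElem_append_right, List.append_assoc]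
  have hterm : patTerm T p (n+1) = patTerm T p n + ε * a := by
    have ht : p.take (n+1) = p.take n ++ [(ε, a)] := by
      rw [List.take_succ]
      congr 1
      rw [List.getElem?_eq_getElem hn1]
      show [p.get ⟨n, hn1⟩] = _
      rw [hget1]
    simp [patTerm, ht, stepSum]
    ring
  have hmem1 : (ε, a) ∈ p := by simp [hpdef]
  have hmem2 : (ε', b) ∈ p := by simp [hpdef]
  have ha : 0 < a := (hp _ hmem1).2
  have hb : 0 < b := (hp _ hmem2).2
  have hε : ε = 1 ∨ ε = -1 := (hp _ hmem1).1
  have hε' : ε' = 1 ∨ ε' = -1 := (hp _ hmem2).1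
  have hs1 := hsteps n hn1
  have hs2 := hsteps (n+1) hn2
  rw [hget1] at hs1
  rw [hget2] at hs2
  -- Y = patTerm T p (n+1) is an odd multiple of a if ε = 1, even multiple if ε = -1
  rcases hε with hε | hε <;> rcases hε' with hε' | hε'
  · -- ε = 1, ε' = 1 : Y odd·a = even·b ⇒ ν₂ b < ν₂ a
    obtain ⟨k, hk⟩ := hs1.1 hε
    obtain ⟨m, hm⟩ := hs2.1 hε'
    have key : (2*k+1) * (a:ℤ) = 2 * m * b := by
      rw [← hm, hterm, hk, hε]; ring
    have := odd_even' ha k m key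
    exact ⟨fun _ => hε', fun hlt => absurd hlt (by omega), fun heq => absurd heq (by omega)⟩
  · -- ε = 1, ε' = -1 : odd·a = odd·b ⇒ equal
    obtain ⟨k, hk⟩ := hs1.1 hε
    obtain ⟨m, hm⟩ := hs2.2 hε'
    have key : (2*k+1) * (a:ℤ) = (2*m+1) * b := by
      rw [← hm, hterm, hk, hε]; ring
    have := odd_odd' ha hb k m key
    exact ⟨fun hlt => absurd hlt (by omega), fun hlt => absurd hlt (by omega),
      fun _ => by rw [hε, hε']; ring⟩
  · -- ε = -1, ε' = 1 : all goals hold directly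
    exact ⟨fun _ => hε', fun _ => hε, fun _ => by rw [hε, hε']⟩
  · -- ε = -1, ε' = -1 : even·a = odd·b ⇒ ν₂ a < ν₂ b
    obtain ⟨k, hk⟩ := hs1.2 hε
    obtain ⟨m, hm⟩ := hs2.2 hε'
    have key : (2*m+1) * (b:ℤ) = 2 * k * a := by
      rw [← hm, hterm, hk, hε]; ring
    have := odd_even' hb m k key
    exact ⟨fun hlt => absurd hlt (by omega), fun _ => hε, fun heq => absurd heq (by omega)⟩
end

section
/- Let a, b, c be positive integers with a > b and a > c. Then no signed pattern with skip sizes a, b, c, a (in this order, with any signs) is realizable; that is, there is no choice of signs ε₁, ε₂, ε₃, ε₄ and starting point T making the signed pattern (ε₁a, ε₂b, ε₃c, ε₄a) weakly realizable with its five terms T₀, …, T₄ pairwise distinct. -/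
lemma keq1 (a x k : ℤ) (ha : 0 < a) (h : x = k * a) (h1 : 0 < x) (h2 : x < 2*a) : k = 1 := by
  by_contra hk
  rcases lt_or_gt_of_ne hk with h' | h'
  · have hk0 : k ≤ 0 := by omega
    nlinarith
  · have hk2 : 2 ≤ k := by omega
    nlinarith

lemma keq0 (a x k : ℤ) (ha : 0 < a) (h : x = k * a) (h1 : -a < x) (h2 : x < a) : k = 0 := by
  by_contra hk
  rcases lt_or_gt_of_ne hk with h' | h'
  · have hk0 : k ≤ -1 := by omega
    nlinarith
  · have hk2 : 1 ≤ k := by omega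
    nlinarith

lemma core_s17 (a b c : ℤ) (ha : 0 < a) (hb : 0 < b) (hc : 0 < c)
    (hba : b < a) (hca : c < a) (ε₁ ε₂ ε₃ T m p q n : ℤ)
    (h₁ : ε₁ = 1 ∨ ε₁ = -1) (h₂ : ε₂ = 1 ∨ ε₂ = -1) (h₃ : ε₃ = 1 ∨ ε₃ = -1)
    (hm : T = m * a) (hme : ε₁ = 1 → Even m) (hmo : ε₁ = -1 → Odd m)
    (hp : T + ε₁ * a = p * b) (hpe : ε₂ = 1 → Even p) (hpo : ε₂ = -1 → Odd p)
    (hq : T + ε₁ * a + ε₂ * b = q * c) (hqe : ε₃ = 1 → Even q) (hqo : ε₃ = -1 → Odd q)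
    (hn : T + ε₁ * a + ε₂ * b + ε₃ * c = n * a)
    (hd03 : ε₁ * a + ε₂ * b + ε₃ * c ≠ 0)
    (hd13 : ε₂ * b + ε₃ * c ≠ 0) : False := by
  rcases h₁ with rfl | rfl <;> rcases h₂ with rfl | rfl <;> rcases h₃ with rfl | rfl
  · -- (1,1,1)
    have key : b + c = (n - m - 1) * a := by linear_combination hn - hm
    have hk := keq1 a (b+c) (n-m-1) ha key (by linarith) (by linarith)
    rw [hk, one_mul] at key
    have em := hme rfl; have ep := hpe rfl; have eq_ := hqe rfl
    have eq1 : (m+1)*c = (p-m-1)*b := by linear_combination hp - hm + (m+1)*key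
    have eq2 : (p+1)*b = q*c := by linear_combination hq - hp
    have big : ((m+1)*(p+1)) * (b*c) = ((p-m-1)*q) * (b*c) := by
      linear_combination ((p+1)*b) * eq1 + ((p-m-1)*b) * eq2
    have eqf : (m+1)*(p+1) = (p-m-1)*q := mul_right_cancel₀ (by positivity) big
    have hodd : Odd ((m+1)*(p+1)) := (em.add_one).mul (ep.add_one)
    rw [eqf] at hodd
    exact (Int.not_odd_iff_even.mpr (eq_.mul_left _)) hodd
  · -- (1,1,-1)
    have key : b - c = (n - m - 1) * a := by linear_combination hn - hm
    have hk := keq0 a (b-c) (n-m-1) ha key (by linarith) (by linarith)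
    rw [hk, zero_mul] at key
    exact hd13 (by linarith)
  · -- (1,-1,1)
    have key : c - b = (n - m - 1) * a := by linear_combination hn - hm
    have hk := keq0 a (c-b) (n-m-1) ha key (by linarith) (by linarith)
    rw [hk, zero_mul] at key
    exact hd13 (by linarith)
  · -- (1,-1,-1)
    have key : b + c = (m + 1 - n) * a := by linear_combination hm - hn
    have hk := keq1 a (b+c) (m+1-n) ha key (by linarith) (by linarith)
    rw [hk, one_mul] at key
    exact hd03 (by linarith)
  · -- (-1,1,1)
    have key : b + c = (n - m + 1) * a := by linear_combination hn - hm
    have hk := keq1 a (b+c) (n-m+1) ha key (by linarith) (by linarith)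
    rw [hk, one_mul] at key
    exact hd03 (by linarith)
  · -- (-1,1,-1)
    have key : b - c = (n - m + 1) * a := by linear_combination hn - hm
    have hk := keq0 a (b-c) (n-m+1) ha key (by linarith) (by linarith)
    rw [hk, zero_mul] at key
    exact hd13 (by linarith)
  · -- (-1,-1,1)
    have key : c - b = (n - m + 1) * a := by linear_combination hn - hm
    have hk := keq0 a (c-b) (n-m+1) ha key (by linarith) (by linarith)
    rw [hk, zero_mul] at key
    exact hd13 (by linarith)
  · -- (-1,-1,-1)
    have key : b + c = (m - 1 - n) * a := by linear_combination hm - hn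
    have hk := keq1 a (b+c) (m-1-n) ha key (by linarith) (by linarith)
    rw [hk, one_mul] at key
    have om := hmo rfl; have op := hpo rfl; have oq := hqo rfl
    have eq1 : (m-1)*c = (p-m+1)*b := by linear_combination hp - hm + (m-1)*key
    have eq2 : (p-1)*b = q*c := by linear_combination hq - hp
    have big : ((m-1)*(p-1)) * (b*c) = ((p-m+1)*q) * (b*c) := by
      linear_combination ((p-1)*b) * eq1 + ((p-m+1)*b) * eq2
    have eqf : (m-1)*(p-1) = (p-m+1)*q := mul_right_cancel₀ (by positivity) big
    have heven : Even ((m-1)*(p-1)) := (om.sub_odd odd_one).mul_right _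
    have hoddR : Odd ((p-m+1)*q) := ((op.sub_odd om).add_one).mul oq
    rw [eqf] at heven
    exact (Int.not_odd_iff_even.mpr heven) hoddR

lemma extract (ε : ℤ) (hε : ε = 1 ∨ ε = -1) (x : ℤ) (n : ℕ)
    (h : (ε = 1 → ∃ k : ℤ, x = 2*k*(n:ℤ)) ∧ (ε = -1 → ∃ k : ℤ, x = (2*k+1)*(n:ℤ))) :
    ∃ m : ℤ, x = m*(n:ℤ) ∧ (ε = 1 → Even m) ∧ (ε = -1 → Odd m) := by
  rcases hε with h1 | h1
  · obtain ⟨k, hk⟩ := h.1 h1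
    exact ⟨2*k, by linarith, fun _ => ⟨k, by ring⟩, fun h' => by omega⟩
  · obtain ⟨k, hk⟩ := h.2 h1
    exact ⟨2*k+1, by linarith, fun h' => by omega, fun _ => ⟨k, by ring⟩⟩

/-- If `a > b` and `a > c`, then no signed pattern with skip sizes `a, b, c, a` in this order
is realizable. -/
theorem abca_forbidden (a b c : ℕ) (ha : 0 < a) (hb : 0 < b) (hc : 0 < c)
    (hba : b < a) (hca : c < a) (ε₁ ε₂ ε₃ ε₄ : ℤ)
    (h₁ : ε₁ = 1 ∨ ε₁ = -1) (h₂ : ε₂ = 1 ∨ ε₂ = -1)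
    (h₃ : ε₃ = 1 ∨ ε₃ = -1) (h₄ : ε₄ = 1 ∨ ε₄ = -1) :
    ¬ Realizable [(ε₁, a), (ε₂, b), (ε₃, c), (ε₄, a)] := by
  rintro ⟨T, ⟨hT0, hnn, hdiv⟩, hdist⟩
  set P : List (ℤ × ℕ) := [(ε₁, a), (ε₂, b), (ε₃, c), (ε₄, a)] with hP
  have e0 : patTerm T P 0 = T := by simp [patTerm, stepSum, hP]
  have e1 : patTerm T P 1 = T + ε₁ * a := by simp [patTerm, stepSum, hP]
  have e2 : patTerm T P 2 = T + ε₁ * a + ε₂ * b := by simp [patTerm, stepSum, hP]; ring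
  have e3 : patTerm T P 3 = T + ε₁ * a + ε₂ * b + ε₃ * c := by
    simp [patTerm, stepSum, hP]; ring
  obtain ⟨m, hm, hme, hmo⟩ := extract ε₁ h₁ (patTerm T P 0) a (hdiv 0 (by simp [hP]))
  obtain ⟨p, hp, hpe, hpo⟩ := extract ε₂ h₂ (patTerm T P 1) b (hdiv 1 (by simp [hP]))
  obtain ⟨q, hq, hqe, hqo⟩ := extract ε₃ h₃ (patTerm T P 2) c (hdiv 2 (by simp [hP]))
  obtain ⟨n, hn, hne, hno⟩ := extract ε₄ h₄ (patTerm T P 3) a (hdiv 3 (by simp [hP]))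
  rw [e0] at hm; rw [e1] at hp; rw [e2] at hq; rw [e3] at hn
  have hd03 : ε₁ * a + ε₂ * b + ε₃ * c ≠ 0 := by
    intro h
    exact hdist 0 3 (by norm_num [hP]) (by norm_num [hP]) (by norm_num)
      (by rw [e0, e3]; linarith)
  have hd13 : ε₂ * b + ε₃ * c ≠ 0 := by
    intro h
    exact hdist 1 3 (by norm_num [hP]) (by norm_num [hP]) (by norm_num)
      (by rw [e1, e3]; linarith)
  exact core_s17 (a:ℤ) b c (by exact_mod_cast ha) (by exact_mod_cast hb) (by exact_mod_cast hc)
    (by exact_mod_cast hba) (by exact_mod_cast hca) ε₁ ε₂ ε₃ T m p q n h₁ h₂ h₃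
    hm hme hmo hp hpe hpo hq hqe hqo hn hd03 hd13
end

section
/- Let a, b, c be pairwise distinct positive integers. Then for every choice of signs ε₁, …, ε₇ ∈ {+1, −1}, the signed pattern with skip sizes b, a, c, a, b, a, c in this order, i.e. (ε₁b, ε₂a, ε₃c, ε₄a, ε₅b, ε₆a, ε₇c), is not weakly realizable. -/
private lemma final_contra (B C d e : ℤ) (hB : 2 ≤ B) (hC : 2 ≤ C)
    (h1 : B - 2 = (2*d-1)*C) (h2 : C - 2 = (2*e-1)*B) : False := by
  have hd : 1 ≤ 2*d-1 := by
    by_contra h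
    push_neg at h
    have h' : 2*d-1 ≤ -1 := by omega
    have := mul_le_mul_of_nonneg_right h' (by linarith : (0:ℤ) ≤ C)
    linarith
  have he : 1 ≤ 2*e-1 := by
    by_contra h
    push_neg at h
    have h' : 2*e-1 ≤ -1 := by omega
    have := mul_le_mul_of_nonneg_right h' (by linarith : (0:ℤ) ≤ B)
    linarith
  have h3 := mul_le_mul_of_nonneg_right hd (by linarith : (0:ℤ) ≤ C)
  have h4 := mul_le_mul_of_nonneg_right he (by linarith : (0:ℤ) ≤ B)
  linarith

private lemma core_s19 (B C : ℤ) (hB : 2 ≤ B) (hC : 2 ≤ C)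
    (k₁ k₂ k₃ k₄ k₅ k₆ k₇ d₁ d₂ d₃ d₄ d₅ d₆ d₇ : ℤ)
    (hd₁ : d₁ = 0 ∨ d₁ = 1) (hd₂ : d₂ = 0 ∨ d₂ = 1) (hd₃ : d₃ = 0 ∨ d₃ = 1)
    (hd₄ : d₄ = 0 ∨ d₄ = 1) (hd₅ : d₅ = 0 ∨ d₅ = 1) (hd₆ : d₆ = 0 ∨ d₆ = 1)
    (hd₇ : d₇ = 0 ∨ d₇ = 1)
    (E1 : (2*k₁+1-d₁)*B = 2*k₂+d₂)
    (E2 : 2*k₂+1-d₂ = (2*k₃+d₃)*C)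
    (E3 : (2*k₃+1-d₃)*C = 2*k₄+d₄)
    (E4 : 2*k₄+1-d₄ = (2*k₅+d₅)*B)
    (E5 : (2*k₅+1-d₅)*B = 2*k₆+d₆)
    (E6 : 2*k₆+1-d₆ = (2*k₇+d₇)*C) : False := by
  rcases hd₄ with h4 | h4 <;> subst h4
  · -- d₄ = 0
    rcases hd₅ with h5 | h5 <;> subst h5
    · -- d₅ = 0 : 2k₄+1 = 2k₅B, parity contradiction
      obtain ⟨w, hw⟩ : ∃ w : ℤ, k₅ * B = w := ⟨_, rfl⟩
      have h : 2*k₄+1 = 2*w := by rw [← hw]; linear_combination E4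
      omega
    · -- d₅ = 1 : 2k₄+1 = (2k₅+1)B, so B is odd
      rcases Int.even_or_odd B with ⟨m, hm⟩ | ⟨m, hm⟩
      · subst hm
        obtain ⟨w, hw⟩ : ∃ w : ℤ, (2*k₅+1) * m = w := ⟨_, rfl⟩
        have h : 2*k₄+1 = 2*w := by rw [← hw]; linear_combination E4
        omega
      · subst hm
        -- B = 2m+1
        rcases hd₆ with h6 | h6 <;> subst h6
        swap
        · -- d₆ = 1 : 2k₅(2m+1) = 2k₆+1, parity contra
          obtain ⟨w, hw⟩ : ∃ w : ℤ, k₅ * (2*m+1) = w := ⟨_, rfl⟩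
          have h : 2*w = 2*k₆+1 := by rw [← hw]; linear_combination E5
          omega
        · -- d₆ = 0
          rcases hd₇ with h7 | h7 <;> subst h7
          · -- d₇ = 0 : 2k₆+1 = 2k₇C contra
            obtain ⟨w, hw⟩ : ∃ w : ℤ, k₇ * C = w := ⟨_, rfl⟩
            have h : 2*k₆+1 = 2*w := by rw [← hw]; linear_combination E6
            omega
          · -- d₇ = 1 : 2k₆+1 = (2k₇+1)C, so C odd
            rcases Int.even_or_odd C with ⟨n, hn⟩ | ⟨n, hn⟩
            · subst hn
              obtain ⟨w, hw⟩ : ∃ w : ℤ, (2*k₇+1) * n = w := ⟨_, rfl⟩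
              have h : 2*k₆+1 = 2*w := by rw [← hw]; linear_combination E6
              omega
            · subst hn
              -- C = 2n+1
              rcases hd₃ with h3 | h3 <;> subst h3
              · -- d₃ = 0 : (2k₃+1)(2n+1) = 2k₄, odd = even contra
                obtain ⟨w, hw⟩ : ∃ w : ℤ, k₃ * n = w := ⟨_, rfl⟩
                have h : 2*(2*w + k₃ + n) + 1 = 2*k₄ := by rw [← hw]; linear_combination E3
                omega
              · -- d₃ = 1
                rcases hd₂ with h2 | h2 <;> subst h2
                swap
                · -- d₂ = 1 : 2k₂ = (2k₃+1)(2n+1) odd contra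
                  obtain ⟨w, hw⟩ : ∃ w : ℤ, k₃ * n = w := ⟨_, rfl⟩
                  have h : 2*k₂ = 2*(2*w + k₃ + n) + 1 := by rw [← hw]; linear_combination E2
                  omega
                · -- d₂ = 0
                  rcases hd₁ with h1 | h1 <;> subst h1
                  · -- d₁ = 0 : (2k₁+1)(2m+1) = 2k₂ odd = even contra
                    obtain ⟨w, hw⟩ : ∃ w : ℤ, k₁ * m = w := ⟨_, rfl⟩
                    have h : 2*(2*w + k₁ + m) + 1 = 2*k₂ := by rw [← hw]; linear_combination E1
                    omega
                  · -- d₁ = 1 : final contradiction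
                    exact final_contra (2*m+1) (2*n+1) (k₃ - k₇) (k₁ - k₅) hB hC
                      (by linear_combination (-1:ℤ)*E3 - E4 - E5 - E6)
                      (by linear_combination (-1:ℤ)*E1 - E2 - E3 - E4)
  · -- d₄ = 1, mirror case
    rcases hd₃ with h3 | h3 <;> subst h3
    swap
    · -- d₃ = 1 : 2k₃C = 2k₄+1 contra
      obtain ⟨w, hw⟩ : ∃ w : ℤ, k₃ * C = w := ⟨_, rfl⟩
      have h : 2*w = 2*k₄+1 := by rw [← hw]; linear_combination E3
      omega
    · -- d₃ = 0 : (2k₃+1)C = 2k₄+1, C odd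
      rcases Int.even_or_odd C with ⟨n, hn⟩ | ⟨n, hn⟩
      · subst hn
        obtain ⟨w, hw⟩ : ∃ w : ℤ, (2*k₃+1) * n = w := ⟨_, rfl⟩
        have h : 2*w = 2*k₄+1 := by rw [← hw]; linear_combination E3
        omega
      · subst hn
        -- C = 2n+1
        rcases hd₂ with h2 | h2 <;> subst h2
        · -- d₂ = 0 : 2k₂+1 = 2k₃(2n+1) contra
          obtain ⟨w, hw⟩ : ∃ w : ℤ, k₃ * (2*n+1) = w := ⟨_, rfl⟩
          have h : 2*k₂+1 = 2*w := by rw [← hw]; linear_combination E2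
          omega
        · -- d₂ = 1
          rcases hd₁ with h1 | h1 <;> subst h1
          swap
          · -- d₁ = 1 : 2k₁B = 2k₂+1 contra
            obtain ⟨w, hw⟩ : ∃ w : ℤ, k₁ * B = w := ⟨_, rfl⟩
            have h : 2*w = 2*k₂+1 := by rw [← hw]; linear_combination E1
            omega
          · -- d₁ = 0 : (2k₁+1)B = 2k₂+1, B odd
            rcases Int.even_or_odd B with ⟨m, hm⟩ | ⟨m, hm⟩
            · subst hm
              obtain ⟨w, hw⟩ : ∃ w : ℤ, (2*k₁+1) * m = w := ⟨_, rfl⟩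
              have h : 2*w = 2*k₂+1 := by rw [← hw]; linear_combination E1
              omega
            · subst hm
              -- B = 2m+1
              rcases hd₅ with h5 | h5 <;> subst h5
              swap
              · -- d₅ = 1 : 2k₄ = (2k₅+1)(2m+1) odd contra
                obtain ⟨w, hw⟩ : ∃ w : ℤ, k₅ * m = w := ⟨_, rfl⟩
                have h : 2*k₄ = 2*(2*w + k₅ + m) + 1 := by rw [← hw]; linear_combination E4
                omega
              · -- d₅ = 0
                rcases hd₆ with h6 | h6 <;> subst h6
                · -- d₆ = 0 : (2k₅+1)(2m+1) = 2k₆ contra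
                  obtain ⟨w, hw⟩ : ∃ w : ℤ, k₅ * m = w := ⟨_, rfl⟩
                  have h : 2*(2*w + k₅ + m) + 1 = 2*k₆ := by rw [← hw]; linear_combination E5
                  omega
                · -- d₆ = 1
                  rcases hd₇ with h7 | h7 <;> subst h7
                  swap
                  · -- d₇ = 1 : 2k₆ = (2k₇+1)(2n+1) odd contra
                    obtain ⟨w, hw⟩ : ∃ w : ℤ, k₇ * n = w := ⟨_, rfl⟩
                    have h : 2*k₆ = 2*(2*w + k₇ + n) + 1 := by rw [← hw]; linear_combination E6
                    omega
                  · -- d₇ = 0 : final contradiction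
                    exact final_contra (2*m+1) (2*n+1) (k₇ - k₃) (k₅ - k₁) hB hC
                      (by linear_combination E3 + E4 + E5 + E6)
                      (by linear_combination E1 + E2 + E3 + E4)

/-- For pairwise distinct positive `a, b, c`, the signed pattern with skip sizes
`b, a, c, a, b, a, c` in this order is not weakly realizable, for any choice of signs. -/
theorem bacabac_forbidden (a b c : ℕ) (ha : 0 < a) (hb : 0 < b) (hc : 0 < c)
    (hab : a ≠ b) (hac : a ≠ c) (hbc : b ≠ c)
    (ε₁ ε₂ ε₃ ε₄ ε₅ ε₆ ε₇ : ℤ)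
    (h₁ : ε₁ = 1 ∨ ε₁ = -1) (h₂ : ε₂ = 1 ∨ ε₂ = -1) (h₃ : ε₃ = 1 ∨ ε₃ = -1)
    (h₄ : ε₄ = 1 ∨ ε₄ = -1) (h₅ : ε₅ = 1 ∨ ε₅ = -1) (h₆ : ε₆ = 1 ∨ ε₆ = -1)
    (h₇ : ε₇ = 1 ∨ ε₇ = -1) :
    ¬ WeaklyRealizable
      [(ε₁, b), (ε₂, a), (ε₃, c), (ε₄, a), (ε₅, b), (ε₆, a), (ε₇, c)] := by
  rintro ⟨T, -, -, hstep⟩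
  have H1 := hstep 0 (by norm_num)
  have H2 := hstep 1 (by norm_num)
  have H3 := hstep 2 (by norm_num)
  have H4 := hstep 3 (by norm_num)
  have H5 := hstep 4 (by norm_num)
  have H6 := hstep 5 (by norm_num)
  have H7 := hstep 6 (by norm_num)
  simp only [List.get, patTerm, stepSum, List.take, List.map, List.sum_cons, List.sum_nil]
    at H1 H2 H3 H4 H5 H6 H7
  -- uniform step data
  have D1 : ∃ k d : ℤ, (d = 0 ∨ d = 1) ∧ T = (2*k+d)*(b:ℤ) ∧
      T + ε₁*(b:ℤ) = (2*k+1-d)*(b:ℤ) := by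
    rcases h₁ with h | h
    · obtain ⟨k, hk⟩ := H1.1 h
      exact ⟨k, 0, Or.inl rfl, by linear_combination hk,
        by linear_combination hk + (b:ℤ)*h⟩
    · obtain ⟨k, hk⟩ := H1.2 h
      exact ⟨k, 1, Or.inr rfl, by linear_combination hk,
        by linear_combination hk + (b:ℤ)*h⟩
  have D2 : ∃ k d : ℤ, (d = 0 ∨ d = 1) ∧ T + ε₁*(b:ℤ) = (2*k+d)*(a:ℤ) ∧
      T + ε₁*(b:ℤ) + ε₂*(a:ℤ) = (2*k+1-d)*(a:ℤ) := by
    rcases h₂ with h | h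
    · obtain ⟨k, hk⟩ := H2.1 h
      exact ⟨k, 0, Or.inl rfl, by linear_combination hk,
        by linear_combination hk + (a:ℤ)*h⟩
    · obtain ⟨k, hk⟩ := H2.2 h
      exact ⟨k, 1, Or.inr rfl, by linear_combination hk,
        by linear_combination hk + (a:ℤ)*h⟩
  have D3 : ∃ k d : ℤ, (d = 0 ∨ d = 1) ∧ T + ε₁*(b:ℤ) + ε₂*(a:ℤ) = (2*k+d)*(c:ℤ) ∧
      T + ε₁*(b:ℤ) + ε₂*(a:ℤ) + ε₃*(c:ℤ) = (2*k+1-d)*(c:ℤ) := by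
    rcases h₃ with h | h
    · obtain ⟨k, hk⟩ := H3.1 h
      exact ⟨k, 0, Or.inl rfl, by linear_combination hk,
        by linear_combination hk + (c:ℤ)*h⟩
    · obtain ⟨k, hk⟩ := H3.2 h
      exact ⟨k, 1, Or.inr rfl, by linear_combination hk,
        by linear_combination hk + (c:ℤ)*h⟩
  have D4 : ∃ k d : ℤ, (d = 0 ∨ d = 1) ∧
      T + ε₁*(b:ℤ) + ε₂*(a:ℤ) + ε₃*(c:ℤ) = (2*k+d)*(a:ℤ) ∧
      T + ε₁*(b:ℤ) + ε₂*(a:ℤ) + ε₃*(c:ℤ) + ε₄*(a:ℤ) = (2*k+1-d)*(a:ℤ) := by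
    rcases h₄ with h | h
    · obtain ⟨k, hk⟩ := H4.1 h
      exact ⟨k, 0, Or.inl rfl, by linear_combination hk,
        by linear_combination hk + (a:ℤ)*h⟩
    · obtain ⟨k, hk⟩ := H4.2 h
      exact ⟨k, 1, Or.inr rfl, by linear_combination hk,
        by linear_combination hk + (a:ℤ)*h⟩
  have D5 : ∃ k d : ℤ, (d = 0 ∨ d = 1) ∧
      T + ε₁*(b:ℤ) + ε₂*(a:ℤ) + ε₃*(c:ℤ) + ε₄*(a:ℤ) = (2*k+d)*(b:ℤ) ∧
      T + ε₁*(b:ℤ) + ε₂*(a:ℤ) + ε₃*(c:ℤ) + ε₄*(a:ℤ) + ε₅*(b:ℤ) = (2*k+1-d)*(b:ℤ) := by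
    rcases h₅ with h | h
    · obtain ⟨k, hk⟩ := H5.1 h
      exact ⟨k, 0, Or.inl rfl, by linear_combination hk,
        by linear_combination hk + (b:ℤ)*h⟩
    · obtain ⟨k, hk⟩ := H5.2 h
      exact ⟨k, 1, Or.inr rfl, by linear_combination hk,
        by linear_combination hk + (b:ℤ)*h⟩
  have D6 : ∃ k d : ℤ, (d = 0 ∨ d = 1) ∧
      T + ε₁*(b:ℤ) + ε₂*(a:ℤ) + ε₃*(c:ℤ) + ε₄*(a:ℤ) + ε₅*(b:ℤ) = (2*k+d)*(a:ℤ) ∧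
      T + ε₁*(b:ℤ) + ε₂*(a:ℤ) + ε₃*(c:ℤ) + ε₄*(a:ℤ) + ε₅*(b:ℤ) + ε₆*(a:ℤ)
        = (2*k+1-d)*(a:ℤ) := by
    rcases h₆ with h | h
    · obtain ⟨k, hk⟩ := H6.1 h
      exact ⟨k, 0, Or.inl rfl, by linear_combination hk,
        by linear_combination hk + (a:ℤ)*h⟩
    · obtain ⟨k, hk⟩ := H6.2 h
      exact ⟨k, 1, Or.inr rfl, by linear_combination hk,
        by linear_combination hk + (a:ℤ)*h⟩
  have D7 : ∃ k d : ℤ, (d = 0 ∨ d = 1) ∧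
      T + ε₁*(b:ℤ) + ε₂*(a:ℤ) + ε₃*(c:ℤ) + ε₄*(a:ℤ) + ε₅*(b:ℤ) + ε₆*(a:ℤ)
        = (2*k+d)*(c:ℤ) := by
    rcases h₇ with h | h
    · obtain ⟨k, hk⟩ := H7.1 h
      exact ⟨k, 0, Or.inl rfl, by linear_combination hk⟩
    · obtain ⟨k, hk⟩ := H7.2 h
      exact ⟨k, 1, Or.inr rfl, by linear_combination hk⟩
  obtain ⟨k₁, d₁, hd₁, x₁, y₁⟩ := D1
  obtain ⟨k₂, d₂, hd₂, x₂, y₂⟩ := D2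
  obtain ⟨k₃, d₃, hd₃, x₃, y₃⟩ := D3
  obtain ⟨k₄, d₄, hd₄, x₄, y₄⟩ := D4
  obtain ⟨k₅, d₅, hd₅, x₅, y₅⟩ := D5
  obtain ⟨k₆, d₆, hd₆, x₆, y₆⟩ := D6
  obtain ⟨k₇, d₇, hd₇, x₇⟩ := D7
  have A1 : (2*k₁+1-d₁)*(b:ℤ) = (2*k₂+d₂)*(a:ℤ) := y₁.symm.trans x₂
  have A2 : (2*k₂+1-d₂)*(a:ℤ) = (2*k₃+d₃)*(c:ℤ) := y₂.symm.trans x₃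
  have A3 : (2*k₃+1-d₃)*(c:ℤ) = (2*k₄+d₄)*(a:ℤ) := y₃.symm.trans x₄
  have A4 : (2*k₄+1-d₄)*(a:ℤ) = (2*k₅+d₅)*(b:ℤ) := y₄.symm.trans x₅
  have A5 : (2*k₅+1-d₅)*(b:ℤ) = (2*k₆+d₆)*(a:ℤ) := y₅.symm.trans x₆
  have A6 : (2*k₆+1-d₆)*(a:ℤ) = (2*k₇+d₇)*(c:ℤ) := y₆.symm.trans x₇
  have ha' : (a:ℤ) ≠ 0 := by positivity
  have ha1 : (1:ℤ) ≤ (a:ℤ) := by exact_mod_cast ha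
  -- c is a multiple of a
  obtain ⟨Cv, hCv⟩ : ∃ Cv : ℤ, (c:ℤ) = Cv * (a:ℤ) := by
    rcases hd₃ with h | h <;> subst h
    · exact ⟨(2*k₄+d₄) - (2*k₂+1-d₂), by linear_combination A3 + A2⟩
    · exact ⟨-((2*k₄+d₄) - (2*k₂+1-d₂)), by linear_combination (-1:ℤ)*A3 - A2⟩
  obtain ⟨Bv, hBv⟩ : ∃ Bv : ℤ, (b:ℤ) = Bv * (a:ℤ) := by
    rcases hd₅ with h | h <;> subst h
    · exact ⟨(2*k₆+d₆) - (2*k₄+1-d₄), by linear_combination A5 + A4⟩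
    · exact ⟨-((2*k₆+d₆) - (2*k₄+1-d₄)), by linear_combination (-1:ℤ)*A5 - A4⟩
  have hC1 : 1 ≤ Cv := by
    by_contra h
    push_neg at h
    have h' : Cv ≤ 0 := by omega
    have := mul_le_mul_of_nonneg_right h' (by linarith : (0:ℤ) ≤ (a:ℤ))
    have hc1 : (1:ℤ) ≤ (c:ℤ) := by exact_mod_cast hc
    linarith
  have hB1 : 1 ≤ Bv := by
    by_contra h
    push_neg at h
    have h' : Bv ≤ 0 := by omega
    have := mul_le_mul_of_nonneg_right h' (by linarith : (0:ℤ) ≤ (a:ℤ))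
    have hb1 : (1:ℤ) ≤ (b:ℤ) := by exact_mod_cast hb
    linarith
  have hC2 : 2 ≤ Cv := by
    rcases eq_or_lt_of_le hC1 with h | h
    · exfalso
      apply hac
      have : (a:ℤ) = (c:ℤ) := by rw [hCv, ← h]; ring
      exact_mod_cast this
    · omega
  have hB2 : 2 ≤ Bv := by
    rcases eq_or_lt_of_le hB1 with h | h
    · exfalso
      apply hab
      have : (a:ℤ) = (b:ℤ) := by rw [hBv, ← h]; ring
      exact_mod_cast this
    · omega
  refine core_s19 Bv Cv hB2 hC2 k₁ k₂ k₃ k₄ k₅ k₆ k₇ d₁ d₂ d₃ d₄ d₅ d₆ d₇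
    hd₁ hd₂ hd₃ hd₄ hd₅ hd₆ hd₇ ?_ ?_ ?_ ?_ ?_ ?_
  · exact mul_right_cancel₀ ha' (by linear_combination A1 - (2*k₁+1-d₁)*hBv)
  · exact mul_right_cancel₀ ha' (by linear_combination A2 + (2*k₃+d₃)*hCv)
  · exact mul_right_cancel₀ ha' (by linear_combination A3 - (2*k₃+1-d₃)*hCv)
  · exact mul_right_cancel₀ ha' (by linear_combination A4 + (2*k₅+d₅)*hBv)
  · exact mul_right_cancel₀ ha' (by linear_combination A5 - (2*k₅+1-d₅)*hBv)
  · exact mul_right_cancel₀ ha' (by linear_combination A6 + (2*k₇+d₇)*hCv)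
end
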